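/- arXiv:cmp-lg/9603002 — 5 statements merged into one kernel-verified Lean document; each statement's English description precedes it below -/
import Mathlib

section
/- For any context-free grammar G and any stack congruence ≡ on the LR(0) shift-reduce recognizer R(G), the unfolded recognizer R_≡ accepts exactly the same strings as R(G); in particular, R_≡ accepts exactly the language L(G). -/
/-!
Infrastructure for finite-state approximation of context-free grammars
(Pereira & Wright). We use Mathlib's `ContextFreeGrammar`.

A dotted rule `A → α · β` is represented as `(some A, α, β)`;
the auxiliary dotted rules `S' → · S` and `S' → S ·` are represented with
first component `none`.  States of the LR(0) characteristic machine `M(G)`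
are sets of dotted rules (the determinization by the subset construction);
the transition function `next` is total, with the empty set `∅` playing the
role of "undefined", so genuine transitions are those with nonempty target.
-/

namespace LRApprox

/-- Context-free grammar with nonterminals in an arbitrary universe, as in the
Mathlib of December 2024 (Mathlib now fixes `NT : Type`). -/
structure ContextFreeGrammar.{uN', uT'} (T : Type uT') where
  /-- Type of nonterminals. -/
  NT : Type uN'
  /-- Initial nonterminal. -/
  initial : NT
  /-- Rewrite rules. -/
  rules : Finset (ContextFreeRule T NT)

/-- One rewriting step of a context-free grammar. -/
def ContextFreeGrammar.Produces {T : Type*} (g : ContextFreeGrammar T)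
    (u v : List (Symbol T g.NT)) : Prop :=
  ∃ r ∈ g.rules, r.Rewrites u v

/-- Reflexive transitive closure of `Produces`. -/
abbrev ContextFreeGrammar.Derives {T : Type*} (g : ContextFreeGrammar T) :
    List (Symbol T g.NT) → List (Symbol T g.NT) → Prop :=
  Relation.ReflTransGen g.Produces

/-- `g` generates `s` from its initial nonterminal. -/
def ContextFreeGrammar.Generates {T : Type*} (g : ContextFreeGrammar T)
    (s : List (Symbol T g.NT)) : Prop :=
  g.Derives [Symbol.nonterminal g.initial] s

/-- The language generated by `g`. -/
def ContextFreeGrammar.language {T : Type*} (g : ContextFreeGrammar T) : Language T :=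
  { w : List T | g.Generates (List.map Symbol.terminal w) }

universe uN uT

variable {T : Type uT}

/-- A dotted rule `A → α · β`; `none` as first component stands for the
auxiliary start symbol `S'`. -/
abbrev DottedRule (g : ContextFreeGrammar.{uN} T) : Type _ :=
  Option g.NT × List (Symbol T g.NT) × List (Symbol T g.NT)

/-- A state of the characteristic machine `M(G)`: a set of dotted rules. -/
abbrev LRState (g : ContextFreeGrammar.{uN} T) : Type _ := Set (DottedRule g)

/-- Closure of a set of dotted rules: whenever `A → α · B β` is present and
`B → γ` is a rule, add `B → · γ`. -/
inductive Closure (g : ContextFreeGrammar.{uN} T) (R : Set (DottedRule g)) :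
    DottedRule g → Prop
  | base {d : DottedRule g} : d ∈ R → Closure g R d
  | step {A : Option g.NT} {α β : List (Symbol T g.NT)} {B : g.NT}
      (r : ContextFreeRule T g.NT) :
      Closure g R (A, α, Symbol.nonterminal B :: β) →
      r ∈ g.rules → r.input = B → Closure g R (some B, [], r.output)

/-- The transition function `δ` of `M(G)`: shift the dot over `X` and take the
closure.  The empty set plays the role of "undefined". -/
def next (g : ContextFreeGrammar.{uN} T) (s : LRState g) (X : Symbol T g.NT) : LRState g :=
  {d | Closure g {d' | ∃ A α β, (A, α, X :: β) ∈ s ∧ d' = (A, α ++ [X], β)} d}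

/-- The start state `s₀` of `M(G)`: the closure of `{S' → · S}`. -/
def start (g : ContextFreeGrammar.{uN} T) : LRState g :=
  {d | Closure g {(none, [], [Symbol.nonterminal g.initial])} d}

/-- The dotted rule `S' → S ·`. -/
def finalDR (g : ContextFreeGrammar.{uN} T) : DottedRule g :=
  (none, [Symbol.nonterminal g.initial], [])

/-- A state is final iff it contains `S' → S ·`. -/
def IsFinal (g : ContextFreeGrammar.{uN} T) (s : LRState g) : Prop := finalDR g ∈ s

/-- Iterated transition function, extended to strings of symbols. -/
def nextStar (g : ContextFreeGrammar.{uN} T) (s : LRState g)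
    (α : List (Symbol T g.NT)) : LRState g :=
  α.foldl (next g) s

/-- A stack of the shift-reduce recognizer: a sequence of (state, symbol) pairs. -/
abbrev Stack (g : ContextFreeGrammar.{uN} T) : Type _ :=
  List (LRState g × Symbol T g.NT)

/-- `Stacks g s σ` iff `σ = ⟨q₀,X₀⟩…⟨q_k,X_k⟩` with `q₀ = s₀`,
`q_i = δ(q_{i-1},X_{i-1})` and `s = δ(q_k,X_k)`; in addition `Stacks s₀`
contains the empty sequence. -/
inductive Stacks (g : ContextFreeGrammar.{uN} T) : LRState g → Stack g → Prop
  | nil : Stacks g (start g) []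
  | snoc {q : LRState g} {σ : Stack g} {X : Symbol T g.NT} :
      Stacks g q σ → next g q X ≠ ∅ → Stacks g (next g q X) (σ ++ [(q, X)])

/-- A configuration `⟨s, σ, w⟩` of the shift-reduce recognizer `R(G)`. -/
structure Cfg (g : ContextFreeGrammar.{uN} T) where
  state : LRState g
  stack : Stack g
  input : List T

/-- A shift move of `R(G)`. -/
inductive ShiftStep (g : ContextFreeGrammar.{uN} T) : Cfg g → Cfg g → Prop
  | shift {s : LRState g} {σ : Stack g} {x : T} {w : List T} :
      next g s (Symbol.terminal x) ≠ ∅ →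
      ShiftStep g ⟨s, σ, x :: w⟩
        ⟨next g s (Symbol.terminal x), σ ++ [(s, Symbol.terminal x)], w⟩

/-- A reduce move of `R(G)`. -/
inductive ReduceStep (g : ContextFreeGrammar.{uN} T) : Cfg g → Cfg g → Prop
  | empty {s : LRState g} {σ : Stack g} {w : List T} {A : g.NT} :
      (some A, ([] : List (Symbol T g.NT)), ([] : List (Symbol T g.NT))) ∈ s →
      next g s (Symbol.nonterminal A) ≠ ∅ →
      ReduceStep g ⟨s, σ, w⟩
        ⟨next g s (Symbol.nonterminal A), σ ++ [(s, Symbol.nonterminal A)], w⟩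
  | pop {s : LRState g} {σ τ : Stack g} {w : List T} {A : g.NT}
      {s₁ : LRState g} {X₁ : Symbol T g.NT} :
      (some A, ((s₁, X₁) :: τ).map Prod.snd, ([] : List (Symbol T g.NT))) ∈ s →
      next g s₁ (Symbol.nonterminal A) ≠ ∅ →
      ReduceStep g ⟨s, σ ++ (s₁, X₁) :: τ, w⟩
        ⟨next g s₁ (Symbol.nonterminal A), σ ++ [(s₁, Symbol.nonterminal A)], w⟩

/-- A move of the shift-reduce recognizer `R(G)`. -/
def Step (g : ContextFreeGrammar.{uN} T) (c c' : Cfg g) : Prop :=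
  ShiftStep g c c' ∨ ReduceStep g c c'

/-- `R(G)` accepts `w`: some sequence of moves leads from the initial
configuration `⟨s₀, ε, w⟩` to a final configuration `⟨s, ⟨s₀,S⟩, ε⟩`, `s ∈ F`. -/
def RAccepts (g : ContextFreeGrammar.{uN} T) (w : List T) : Prop :=
  ∃ s : LRState g, IsFinal g s ∧
    Relation.ReflTransGen (Step g) ⟨start g, [], w⟩
      ⟨s, [(start g, Symbol.nonterminal g.initial)], []⟩

/-- A stack congruence on `R(G)`: a family of equivalence relations on
`Stacks(s)`, compatible with pushing. -/
def IsStackCongruence (g : ContextFreeGrammar.{uN} T)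
    (E : LRState g → Stack g → Stack g → Prop) : Prop :=
  (∀ s σ σ', E s σ σ' → Stacks g s σ ∧ Stacks g s σ') ∧
  (∀ s σ, Stacks g s σ → E s σ σ) ∧
  (∀ s σ σ', E s σ σ' → E s σ' σ) ∧
  (∀ s σ₁ σ₂ σ₃, E s σ₁ σ₂ → E s σ₂ σ₃ → E s σ₁ σ₃) ∧
  (∀ s X σ σ', next g s X ≠ ∅ → E s σ σ' →
    E (next g s X) (σ ++ [(s, X)]) (σ' ++ [(s, X)]))

/-- A state of the unfolded recognizer `R_≡`: a state of `M(G)` together with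
an equivalence class of stacks (represented as a set of stacks). -/
abbrev UState (g : ContextFreeGrammar.{uN} T) : Type _ := LRState g × Set (Stack g)

/-- Transition function `δ_≡` of the unfolded recognizer:
`δ_≡(⟨s,[σ]⟩, X) = ⟨δ(s,X), [σ⟨s,X⟩]⟩`. -/
def uNext (g : ContextFreeGrammar.{uN} T) (E : LRState g → Stack g → Stack g → Prop)
    (p : UState g) (X : Symbol T g.NT) : UState g :=
  (next g p.1 X,
   {τ | Stacks g (next g p.1 X) τ ∧ ∃ σ ∈ p.2, E (next g p.1 X) τ (σ ++ [(p.1, X)])})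

/-- Start state `⟨s₀, [ε]⟩` of the unfolded recognizer. -/
def uStart (g : ContextFreeGrammar.{uN} T)
    (E : LRState g → Stack g → Stack g → Prop) : UState g :=
  (start g, {τ | Stacks g (start g) τ ∧ E (start g) τ []})

/-- Genuine states of the unfolded recognizer: pairs `⟨s, [σ]_s⟩` with
`σ ∈ Stacks(s)`. -/
def IsUState (g : ContextFreeGrammar.{uN} T)
    (E : LRState g → Stack g → Stack g → Prop) (p : UState g) : Prop :=
  ∃ σ, Stacks g p.1 σ ∧ p.2 = {τ | Stacks g p.1 τ ∧ E p.1 τ σ}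

/-- Iterated `δ_≡`, extended to strings of symbols. -/
def uNextStar (g : ContextFreeGrammar.{uN} T)
    (E : LRState g → Stack g → Stack g → Prop)
    (p : UState g) (α : List (Symbol T g.NT)) : UState g :=
  α.foldl (uNext g E) p

/-- A configuration of the unfolded recognizer `R_≡`. -/
structure UCfg (g : ContextFreeGrammar.{uN} T) where
  state : UState g
  stack : List (UState g × Symbol T g.NT)
  input : List T

/-- A shift move of the unfolded recognizer. -/
inductive UShiftStep (g : ContextFreeGrammar.{uN} T)
    (E : LRState g → Stack g → Stack g → Prop) : UCfg g → UCfg g → Prop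
  | shift {p : UState g} {σ : List (UState g × Symbol T g.NT)} {x : T} {w : List T} :
      next g p.1 (Symbol.terminal x) ≠ ∅ →
      UShiftStep g E ⟨p, σ, x :: w⟩
        ⟨uNext g E p (Symbol.terminal x), σ ++ [(p, Symbol.terminal x)], w⟩

/-- A reduce move of the unfolded recognizer. -/
inductive UReduceStep (g : ContextFreeGrammar.{uN} T)
    (E : LRState g → Stack g → Stack g → Prop) : UCfg g → UCfg g → Prop
  | empty {p : UState g} {σ : List (UState g × Symbol T g.NT)} {w : List T} {A : g.NT} :
      (some A, ([] : List (Symbol T g.NT)), ([] : List (Symbol T g.NT))) ∈ p.1 →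
      next g p.1 (Symbol.nonterminal A) ≠ ∅ →
      UReduceStep g E ⟨p, σ, w⟩
        ⟨uNext g E p (Symbol.nonterminal A), σ ++ [(p, Symbol.nonterminal A)], w⟩
  | pop {p : UState g} {σ τ : List (UState g × Symbol T g.NT)} {w : List T} {A : g.NT}
      {p₁ : UState g} {X₁ : Symbol T g.NT} :
      (some A, ((p₁, X₁) :: τ).map Prod.snd, ([] : List (Symbol T g.NT))) ∈ p.1 →
      next g p₁.1 (Symbol.nonterminal A) ≠ ∅ →
      UReduceStep g E ⟨p, σ ++ (p₁, X₁) :: τ, w⟩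
        ⟨uNext g E p₁ (Symbol.nonterminal A), σ ++ [(p₁, Symbol.nonterminal A)], w⟩

/-- A move of the unfolded recognizer `R_≡`. -/
def UStep (g : ContextFreeGrammar.{uN} T)
    (E : LRState g → Stack g → Stack g → Prop) (c c' : UCfg g) : Prop :=
  UShiftStep g E c c' ∨ UReduceStep g E c c'

/-- The unfolded recognizer `R_≡` accepts `w`. -/
def UAccepts (g : ContextFreeGrammar.{uN} T)
    (E : LRState g → Stack g → Stack g → Prop) (w : List T) : Prop :=
  ∃ p : UState g, IsFinal g p.1 ∧
    Relation.ReflTransGen (UStep g E) ⟨uStart g E, [], w⟩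
      ⟨p, [(uStart g E, Symbol.nonterminal g.initial)], []⟩

/-- `Pop(p)`: the unfolded states reachable from `p` by a reduction. -/
def PopSet (g : ContextFreeGrammar.{uN} T)
    (E : LRState g → Stack g → Stack g → Prop) (p : UState g) : Set (UState g) :=
  {p' | ∃ (A : g.NT) (α : List (Symbol T g.NT)) (p'' : UState g),
    IsUState g E p'' ∧
    (some A, α, ([] : List (Symbol T g.NT))) ∈ p.1 ∧
    (some A, ([] : List (Symbol T g.NT)), α) ∈ p''.1 ∧
    uNextStar g E p'' α = p ∧
    next g p''.1 (Symbol.nonterminal A) ≠ ∅ ∧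
    uNext g E p'' (Symbol.nonterminal A) = p'}

/-- Paths in the flattening `F_≡` of the unfolded recognizer: terminal
transitions follow `δ_≡` and reductions become ε-transitions. -/
inductive FPath (g : ContextFreeGrammar.{uN} T)
    (E : LRState g → Stack g → Stack g → Prop) : UState g → List T → UState g → Prop
  | refl (p : UState g) : FPath g E p [] p
  | shift {p : UState g} {x : T} {w : List T} {q : UState g} :
      next g p.1 (Symbol.terminal x) ≠ ∅ →
      FPath g E (uNext g E p (Symbol.terminal x)) w q → FPath g E p (x :: w) q
  | eps {p p' : UState g} {w : List T} {q : UState g} :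
      p' ∈ PopSet g E p → FPath g E p' w q → FPath g E p w q

/-- The flattening `F_≡` accepts `w`. -/
def FAccepts (g : ContextFreeGrammar.{uN} T)
    (E : LRState g → Stack g → Stack g → Prop) (w : List T) : Prop :=
  ∃ q : UState g, IsFinal g q.1 ∧ FPath g E (uStart g E) w q

/-- A stack `⟨s₁,X₁⟩…⟨s_k,X_k⟩` is a loop if `δ(s_k,X_k) = s₁`. -/
def IsLoop (g : ContextFreeGrammar.{uN} T) (τ : Stack g) : Prop :=
  ∃ p q : LRState g × Symbol T g.NT,
    τ.head? = some p ∧ τ.getLast? = some q ∧ next g q.1 q.2 = p.1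

/-- A loop is minimal if no proper prefix of it is a loop. -/
def IsMinimalLoop (g : ContextFreeGrammar.{uN} T) (τ : Stack g) : Prop :=
  IsLoop g τ ∧ ∀ τ' : Stack g, τ' <+: τ → τ' ≠ τ → ¬ IsLoop g τ'

/-- A stack is collapsible if it contains a loop as a contiguous segment. -/
def Collapsible (g : ContextFreeGrammar.{uN} T) (σ : Stack g) : Prop :=
  ∃ ρ τ υ : Stack g, σ = ρ ++ τ ++ υ ∧ IsLoop g τ

/-- `σ` immediately collapses to `σ'`: remove the earliest minimal loop. -/
def ImmediatelyCollapses (g : ContextFreeGrammar.{uN} T) (σ σ' : Stack g) : Prop :=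
  ∃ ρ τ υ : Stack g, σ = ρ ++ τ ++ υ ∧ σ' = ρ ++ υ ∧ IsMinimalLoop g τ ∧
    ¬ ∃ ρ' τ' υ' : Stack g, σ = ρ' ++ τ' ++ υ' ∧ ρ' <+: ρ ∧ ρ' ≠ ρ ∧ IsLoop g τ'

/-- `σ` collapses to `σ'` by finitely many immediate collapses. -/
def Collapses (g : ContextFreeGrammar.{uN} T) : Stack g → Stack g → Prop :=
  Relation.ReflTransGen (ImmediatelyCollapses g)

/-- Two stacks are collapsing-equivalent if they collapse to the same
uncollapsible stack. -/
def CollEquiv (g : ContextFreeGrammar.{uN} T) (σ σ' : Stack g) : Prop :=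
  ∃ τ : Stack g, ¬ Collapsible g τ ∧ Collapses g σ τ ∧ Collapses g σ' τ

/-- The collapsing congruence: the restriction of collapsing equivalence to
the sets `Stacks(s)`. -/
def CollCong (g : ContextFreeGrammar.{uN} T) (s : LRState g) (σ σ' : Stack g) : Prop :=
  Stacks g s σ ∧ Stacks g s σ' ∧ CollEquiv g σ σ'

/-- A CFG is left-linear if every rule has the form `A → Bβ` or `A → β`
with `β` a string of terminals. -/
def LeftLinear (g : ContextFreeGrammar.{uN} T) : Prop :=
  ∀ r ∈ g.rules, (∃ β : List T, r.output = β.map Symbol.terminal) ∨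
    (∃ (B : g.NT) (β : List T), r.output = Symbol.nonterminal B :: β.map Symbol.terminal)

/-- A CFG is right-linear if every rule has the form `A → βB` or `A → β`
with `β` a string of terminals. -/
def RightLinear (g : ContextFreeGrammar.{uN} T) : Prop :=
  ∀ r ∈ g.rules, (∃ β : List T, r.output = β.map Symbol.terminal) ∨
    (∃ (B : g.NT) (β : List T), r.output = β.map Symbol.terminal ++ [Symbol.nonterminal B])

/-- Reachable (genuine) states of `M(G)`. -/
def ReachableState (g : ContextFreeGrammar.{uN} T) (s : LRState g) : Prop :=
  s ≠ ∅ ∧ ∃ α : List (Symbol T g.NT), nextStar g (start g) α = s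

namespace ContextFreeGrammar

lemma Derives.refl {g : ContextFreeGrammar.{uN} T} (w : List (Symbol T g.NT)) : g.Derives w w :=
  Relation.ReflTransGen.refl

lemma Produces.trans_derives {g : ContextFreeGrammar.{uN} T} {u v w : List (Symbol T g.NT)}
    (huv : g.Produces u v) (hvw : g.Derives v w) : g.Derives u w :=
  Relation.ReflTransGen.head huv hvw

lemma Produces.append_right {g : ContextFreeGrammar.{uN} T} {v w : List (Symbol T g.NT)}
    (hvw : g.Produces v w) (p : List (Symbol T g.NT)) : g.Produces (v ++ p) (w ++ p) := by
  obtain ⟨r, hr, hrw⟩ := hvw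
  exact ⟨r, hr, hrw.append_right p⟩

lemma Derives.append_right {g : ContextFreeGrammar.{uN} T} {v w : List (Symbol T g.NT)}
    (hvw : g.Derives v w) (p : List (Symbol T g.NT)) : g.Derives (v ++ p) (w ++ p) := by
  induction hvw with
  | refl => exact Relation.ReflTransGen.refl
  | tail _ last ih => exact ih.tail (last.append_right p)

lemma mem_language_iff {g : ContextFreeGrammar.{uN} T} (w : List T) :
    w ∈ g.language ↔ g.Derives [Symbol.nonterminal g.initial] (List.map Symbol.terminal w) :=
  Iff.rfl

end ContextFreeGrammar

section Aux
open ContextFreeGrammar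
variable {g : ContextFreeGrammar.{uN} T}

/-! ### Counted derivations -/

inductive DSteps (g : ContextFreeGrammar.{uN} T) :
    List (Symbol T g.NT) → List (Symbol T g.NT) → ℕ → Prop
  | refl (u : List (Symbol T g.NT)) : DSteps g u u 0
  | head {u v w : List (Symbol T g.NT)} {n : ℕ} :
      g.Produces u v → DSteps g v w n → DSteps g u w (n + 1)

lemma dsteps_of_derives {u v : List (Symbol T g.NT)} (h : g.Derives u v) :
    ∃ n, DSteps g u v n := by
  induction h using Relation.ReflTransGen.head_induction_on with
  | refl => exact ⟨0, .refl v⟩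
  | head hp _ ih => obtain ⟨n, hn⟩ := ih; exact ⟨n + 1, .head hp hn⟩

lemma derives_of_dsteps {u v : List (Symbol T g.NT)} {n : ℕ} (h : DSteps g u v n) :
    g.Derives u v := by
  induction h with
  | refl => exact Derives.refl _
  | head hp _ ih => exact hp.trans_derives ih

lemma not_produces_terminal {w : List T} {v : List (Symbol T g.NT)}
    (h : g.Produces (w.map Symbol.terminal) v) : False := by
  obtain ⟨r, _, hr⟩ := h
  obtain ⟨p, q, hu, -⟩ := hr.exists_parts
  have : Symbol.nonterminal r.input ∈ w.map (Symbol.terminal : T → Symbol T g.NT) := by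
    rw [hu]; simp
  simp only [List.mem_map] at this
  obtain ⟨x, -, hx⟩ := this
  cases hx

lemma dsteps_terminal {w : List T} {v : List (Symbol T g.NT)} {n : ℕ}
    (h : DSteps g (w.map Symbol.terminal) v n) :
    v = w.map Symbol.terminal ∧ n = 0 := by
  cases h with
  | refl => exact ⟨rfl, rfl⟩
  | head hp _ => exact absurd hp not_produces_terminal

/-- Splitting a counted derivation of a concatenation into a terminal word. -/
lemma dsteps_zero {u v : List (Symbol T g.NT)} (h : DSteps g u v 0) : u = v := by
  cases h; rfl

lemma dsteps_succ {u v : List (Symbol T g.NT)} {n : ℕ} (h : DSteps g u v (n + 1)) :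
    ∃ x, g.Produces u x ∧ DSteps g x v n := by
  cases h with
  | head hp hd => exact ⟨_, hp, hd⟩

lemma dsteps_split : ∀ (n : ℕ) (α β : List (Symbol T g.NT)) (w : List T),
    DSteps g (α ++ β) (w.map Symbol.terminal) n →
    ∃ (w₁ w₂ : List T) (n₁ n₂ : ℕ), w = w₁ ++ w₂ ∧ n₁ + n₂ = n ∧
      DSteps g α (w₁.map Symbol.terminal) n₁ ∧ DSteps g β (w₂.map Symbol.terminal) n₂ := by
  intro n
  induction n with
  | zero =>
    intro α β w h
    have heq : α ++ β = w.map Symbol.terminal := dsteps_zero h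
    rw [eq_comm, List.map_eq_append_iff] at heq
    obtain ⟨w₁, w₂, rfl, h₁, h₂⟩ := heq
    exact ⟨w₁, w₂, 0, 0, rfl, rfl, h₁ ▸ DSteps.refl α, h₂ ▸ DSteps.refl β⟩
  | succ n ih =>
    intro α β w h
    obtain ⟨v, hp, hd⟩ := dsteps_succ h
    obtain ⟨r, hr, hrw⟩ := hp
    obtain ⟨p, q, hu, hv⟩ := hrw.exists_parts
    rw [List.append_assoc] at hu
    rcases List.append_eq_append_iff.mp hu with ⟨k, hk1, hk2⟩ | ⟨k, hk1, hk2⟩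
    · -- p = α ++ k : the rewritten nonterminal is inside β
      subst hk1
      have hβ : β = k ++ [Symbol.nonterminal r.input] ++ q := by
        rw [hk2, List.append_assoc]
      have hβ' : g.Produces β (k ++ r.output ++ q) := by
        rw [hβ]; exact ⟨r, hr, ContextFreeRule.rewrites_of_exists_parts r k q⟩
      have hv' : v = α ++ (k ++ r.output ++ q) := by
        rw [hv]; simp [List.append_assoc]
      obtain ⟨w₁, w₂, n₁, n₂, hw, hn, h₁, h₂⟩ := ih α (k ++ r.output ++ q) w (hv' ▸ hd)
      exact ⟨w₁, w₂, n₁, n₂ + 1, hw, by omega, h₁, .head hβ' h₂⟩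
    · -- α = p ++ k with k ++ β = [nt] ++ q
      subst hk1
      cases k with
      | nil =>
        -- α = p, β = [nt] ++ q
        simp only [List.nil_append] at hk2
        have hβ' : g.Produces β (r.output ++ q) := by
          rw [← hk2]
          exact ⟨r, hr, by simpa using ContextFreeRule.rewrites_of_exists_parts r [] q⟩
        have hv' : v = (p ++ []) ++ (r.output ++ q) := by rw [hv]; simp [List.append_assoc]
        obtain ⟨w₁, w₂, n₁, n₂, hw, hn, h₁, h₂⟩ := ih (p ++ []) (r.output ++ q) w (hv' ▸ hd)
        exact ⟨w₁, w₂, n₁, n₂ + 1, hw, by omega, by simpa using h₁, .head hβ' h₂⟩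
      | cons X k' =>
        obtain ⟨hX, hk⟩ : X = Symbol.nonterminal r.input ∧ q = k' ++ β := by
          have := hk2
          simp only [List.cons_append, List.singleton_append, List.cons.injEq] at this
          exact ⟨this.1.symm, this.2⟩
        subst hX
        have hα' : g.Produces (p ++ Symbol.nonterminal r.input :: k') (p ++ r.output ++ k') := by
          refine ⟨r, hr, ?_⟩
          have := ContextFreeRule.rewrites_of_exists_parts r p k'
          simpa [List.append_assoc] using this
        have hv' : v = (p ++ r.output ++ k') ++ β := by
          rw [hv, hk]; simp [List.append_assoc]
        obtain ⟨w₁, w₂, n₁, n₂, hw, hn, h₁, h₂⟩ := ih (p ++ r.output ++ k') β w (hv' ▸ hd)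
        exact ⟨w₁, w₂, n₁ + 1, n₂, hw, by omega, .head hα' h₁, h₂⟩

/-! ### Basic facts about the characteristic machine -/

lemma item_next {s : LRState g} {A : Option g.NT} {α β : List (Symbol T g.NT)}
    {X : Symbol T g.NT} (h : (A, α, X :: β) ∈ s) :
    (A, α ++ [X], β) ∈ next g s X :=
  Closure.base ⟨A, α, β, h, rfl⟩

lemma next_ne_empty {s : LRState g} {A : Option g.NT} {α β : List (Symbol T g.NT)}
    {X : Symbol T g.NT} (h : (A, α, X :: β) ∈ s) : next g s X ≠ ∅ :=
  Set.nonempty_iff_ne_empty.mp ⟨_, item_next h⟩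

lemma nextStar_cons {s : LRState g} {X : Symbol T g.NT} {γ : List (Symbol T g.NT)} :
    nextStar g s (X :: γ) = nextStar g (next g s X) γ := rfl

lemma item_nextStar {γ : List (Symbol T g.NT)} : ∀ {s : LRState g} {A : Option g.NT}
    {α β : List (Symbol T g.NT)}, (A, α, γ ++ β) ∈ s → (A, α ++ γ, β) ∈ nextStar g s γ := by
  induction γ with
  | nil => intro s A α β h; simpa [nextStar] using h
  | cons X γ' ih =>
    intro s A α β h
    have h1 : (A, α ++ [X], γ' ++ β) ∈ next g s X := item_next h
    have := ih h1
    rw [nextStar_cons]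
    simpa [List.append_assoc] using this

/-- Every state arising in a run is closed under the closure rule. -/
def ClosedSt (g : ContextFreeGrammar.{uN} T) (s : LRState g) : Prop :=
  ∀ (A : Option g.NT) (α β : List (Symbol T g.NT)) (B : g.NT) (r : ContextFreeRule T g.NT),
    (A, α, Symbol.nonterminal B :: β) ∈ s → r ∈ g.rules → r.input = B →
    (some B, [], r.output) ∈ s

lemma closedSt_start : ClosedSt g (start g) :=
  fun _ _ _ _ r h hr hi => Closure.step r h hr hi

lemma closedSt_next {s : LRState g} {X : Symbol T g.NT} : ClosedSt g (next g s X) :=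
  fun _ _ _ _ r h hr hi => Closure.step r h hr hi

lemma closedSt_nextStar {s : LRState g} (hs : ClosedSt g s) (γ : List (Symbol T g.NT)) :
    ClosedSt g (nextStar g s γ) := by
  induction γ generalizing s with
  | nil => exact hs
  | cons X γ' ih => exact ih closedSt_next

/-- Every completed item with a genuine nonterminal comes from a rule of the grammar. -/
def SoundSt (g : ContextFreeGrammar.{uN} T) (s : LRState g) : Prop :=
  ∀ (A : g.NT) (μ ν : List (Symbol T g.NT)), (some A, μ, ν) ∈ s →
    ∃ r ∈ g.rules, r.input = A ∧ r.output = μ ++ ν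

lemma soundSt_start : SoundSt g (start g) := by
  intro A μ ν h
  have key : ∀ d : DottedRule g, Closure g {(none, [], [Symbol.nonterminal g.initial])} d →
      ∀ (A : g.NT) (μ ν : List (Symbol T g.NT)), d = (some A, μ, ν) →
      ∃ r ∈ g.rules, r.input = A ∧ r.output = μ ++ ν := by
    intro d hd
    induction hd with
    | base hmem =>
      intro A μ ν hd
      rw [Set.mem_singleton_iff] at hmem
      rw [hmem] at hd
      simp only [Prod.mk.injEq] at hd
      exact absurd hd.1 (by simp)
    | step r _ hr hi ih =>
      intro A μ ν hd
      simp only [Prod.mk.injEq] at hd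
      obtain ⟨hA, hμ, hν⟩ := hd
      exact ⟨r, hr, by rw [hi, Option.some_inj.mp hA], by rw [← hμ, ← hν]; simp⟩
  exact key _ h A μ ν rfl

lemma soundSt_next {s : LRState g} (hs : SoundSt g s) (X : Symbol T g.NT) :
    SoundSt g (next g s X) := by
  intro A μ ν h
  have key : ∀ d : DottedRule g,
      Closure g {d' | ∃ A α β, (A, α, X :: β) ∈ s ∧ d' = (A, α ++ [X], β)} d →
      ∀ (A : g.NT) (μ ν : List (Symbol T g.NT)), d = (some A, μ, ν) →
      ∃ r ∈ g.rules, r.input = A ∧ r.output = μ ++ ν := by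
    intro d hd
    induction hd with
    | base hmem =>
      intro A μ ν hd
      obtain ⟨A', α, β, hmm, hd'⟩ := hmem
      subst hd'
      simp only [Prod.mk.injEq] at hd
      obtain ⟨hA, hμ, hν⟩ := hd
      cases A' with
      | none => exact absurd hA (by simp)
      | some A'' =>
        obtain ⟨r, hr, hri, hro⟩ := hs A'' α (X :: β) hmm
        exact ⟨r, hr, by rw [hri, Option.some_inj.mp hA], by rw [hro, ← hμ, ← hν]; simp⟩
    | step r _ hr hi ih =>
      intro A μ ν hd
      simp only [Prod.mk.injEq] at hd
      obtain ⟨hA, hμ, hν⟩ := hd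
      exact ⟨r, hr, by rw [hi, Option.some_inj.mp hA], by rw [← hμ, ← hν]; simp⟩
  exact key _ h A μ ν rfl

/-! ### Completeness of the shift-reduce recognizer -/

/-- The stack segment pushed while traversing `γ` from state `s`. -/
def stackOf (g : ContextFreeGrammar.{uN} T) : LRState g → List (Symbol T g.NT) → Stack g
  | _, [] => []
  | s, X :: γ => (s, X) :: stackOf g (next g s X) γ

@[simp] lemma stackOf_nil {s : LRState g} : stackOf g s [] = [] := rfl

@[simp] lemma stackOf_cons {s : LRState g} {X : Symbol T g.NT} {γ : List (Symbol T g.NT)} :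
    stackOf g s (X :: γ) = (s, X) :: stackOf g (next g s X) γ := rfl

lemma stackOf_map_snd {γ : List (Symbol T g.NT)} : ∀ {s : LRState g},
    (stackOf g s γ).map Prod.snd = γ := by
  induction γ with
  | nil => intro s; rfl
  | cons X γ' ih => intro s; simp [ih]

lemma dsteps_nil {v : List (Symbol T g.NT)} {n : ℕ} (h : DSteps g [] v n) : v = [] := by
  cases h with
  | refl => rfl
  | head hp _ =>
    obtain ⟨r, -, hrw⟩ := hp
    obtain ⟨p, q, hu, -⟩ := hrw.exists_parts
    exact absurd hu (by simp)

set_option maxHeartbeats 1000000 in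
lemma run_of_dsteps (n : ℕ) : ∀ (γ : List (Symbol T g.NT)) (w : List T),
    DSteps g γ (w.map Symbol.terminal) n →
    ∀ (s : LRState g), ClosedSt g s →
    ∀ (A : Option g.NT) (β δ : List (Symbol T g.NT)), (A, β, γ ++ δ) ∈ s →
    ∀ (σ : Stack g) (v : List T),
    Relation.ReflTransGen (Step g) ⟨s, σ, w ++ v⟩
      ⟨nextStar g s γ, σ ++ stackOf g s γ, v⟩ := by
  induction n using Nat.strong_induction_on with
  | _ n IH =>
  intro γ
  induction γ with
  | nil =>
    intro w hd s hcl A β δ hit σ v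
    have hw : w = [] := by
      have := dsteps_nil hd
      cases w with
      | nil => rfl
      | cons a t => exact absurd this (by simp)
    subst hw
    simp only [List.nil_append]
    have : nextStar g s ([] : List (Symbol T g.NT)) = s := rfl
    rw [this, stackOf_nil, List.append_nil]
  | cons X γ' ihγ =>
    intro w hd s hcl A β δ hit σ v
    have hd' : DSteps g ([X] ++ γ') (w.map Symbol.terminal) n := by simpa using hd
    obtain ⟨w₁, w₂, n₁, n₂, hw, hn, h₁, h₂⟩ := dsteps_split n [X] γ' w hd'
    subst hw
    cases X with
    | terminal a =>
      have h₁' : DSteps g (([a] : List T).map Symbol.terminal)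
          (w₁.map Symbol.terminal) n₁ := by simpa using h₁
      obtain ⟨hv, hn₁⟩ := dsteps_terminal h₁'
      have hw₁ : w₁ = [a] :=
        List.map_injective_iff.mpr (fun x y hxy => by injection hxy) hv
      subst hw₁
      have hn₂ : n₂ = n := by omega
      subst hn₂
      have hne : next g s (Symbol.terminal a) ≠ ∅ := next_ne_empty hit
      have hshift : ShiftStep g ⟨s, σ, a :: (w₂ ++ v)⟩
          ⟨next g s (Symbol.terminal a), σ ++ [(s, Symbol.terminal a)], w₂ ++ v⟩ :=
        ShiftStep.shift hne
      have hrun := ihγ w₂ h₂ (next g s (Symbol.terminal a)) closedSt_next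
        A (β ++ [Symbol.terminal a]) δ (item_next hit) (σ ++ [(s, Symbol.terminal a)]) v
      refine Relation.ReflTransGen.head
        (b := ⟨next g s (Symbol.terminal a), σ ++ [(s, Symbol.terminal a)], w₂ ++ v⟩)
        (Or.inl ?_) ?_
      · exact hshift
      · simpa [List.append_assoc, nextStar_cons] using hrun
    | nonterminal B =>
      have hn₁pos : n₁ ≠ 0 := by
        intro h0
        subst h0
        have := dsteps_zero h₁
        cases w₁ with
        | nil => exact absurd this (by simp)
        | cons b t => exact absurd this (by simp)
      obtain ⟨m, rfl⟩ : ∃ m, n₁ = m + 1 := ⟨n₁ - 1, by omega⟩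
      obtain ⟨x, hp, hdx⟩ := dsteps_succ h₁
      obtain ⟨r, hr, hrw⟩ := hp
      obtain ⟨p, q, hpq, hx⟩ := hrw.exists_parts
      obtain ⟨hp0, hq0, hri⟩ : p = [] ∧ q = [] ∧ r.input = B := by
        cases p with
        | nil =>
          simp only [List.nil_append, List.singleton_append, List.cons.injEq] at hpq
          obtain ⟨hB, hq⟩ := hpq
          exact ⟨rfl, hq.symm, by injection hB with h; exact h.symm⟩
        | cons y p' =>
          simp only [List.cons_append, List.cons.injEq] at hpq
          exact absurd hpq.2 (by simp)
      subst hp0 hq0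
      subst hri
      have hx' : x = r.output := by simpa using hx
      subst hx'
      have hBitem : (some r.input, ([] : List (Symbol T g.NT)), r.output) ∈ s :=
        hcl A β (γ' ++ δ) _ r hit hr rfl
      have hrun₁ := IH m (by omega) r.output w₁ hdx s hcl (some r.input) [] []
        (by simpa using hBitem) σ (w₂ ++ v)
      have hcompl : (some r.input, r.output, ([] : List (Symbol T g.NT))) ∈ nextStar g s r.output := by
        have := item_nextStar (γ := r.output) (s := s) (A := some r.input) (α := [])
          (β := []) (by simpa using hBitem)
        simpa using this
      have hne : next g s (Symbol.nonterminal r.input) ≠ ∅ := next_ne_empty hit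
      have hred : ReduceStep g ⟨nextStar g s r.output, σ ++ stackOf g s r.output, w₂ ++ v⟩
          ⟨next g s (Symbol.nonterminal r.input), σ ++ [(s, Symbol.nonterminal r.input)], w₂ ++ v⟩ := by
        cases hout : r.output with
        | nil =>
          rw [hout] at hcompl
          have h1 : nextStar g s ([] : List (Symbol T g.NT)) = s := rfl
          rw [h1, stackOf_nil, List.append_nil]
          exact ReduceStep.empty hcompl hne
        | cons Y out' =>
          rw [hout] at hcompl
          rw [stackOf_cons]
          have hmem : (some r.input,
              (((s, Y) :: stackOf g (next g s Y) out').map Prod.snd),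
              ([] : List (Symbol T g.NT))) ∈ nextStar g s (Y :: out') := by
            simpa [stackOf_map_snd] using hcompl
          exact ReduceStep.pop hmem hne
      have hrun₂ := IH n₂ (by omega) γ' w₂ h₂ (next g s (Symbol.nonterminal r.input)) closedSt_next
        A (β ++ [Symbol.nonterminal r.input]) δ (item_next hit) (σ ++ [(s, Symbol.nonterminal r.input)]) v
      have hstep : Relation.ReflTransGen (Step g)
          ⟨nextStar g s r.output, σ ++ stackOf g s r.output, w₂ ++ v⟩
          ⟨nextStar g s (Symbol.nonterminal r.input :: γ'), σ ++ stackOf g s (Symbol.nonterminal r.input :: γ'), v⟩ := by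
        refine Relation.ReflTransGen.head (Or.inr hred) ?_
        simpa [List.append_assoc, nextStar_cons] using hrun₂
      have hrun₁' : Relation.ReflTransGen (Step g) ⟨s, σ, (w₁ ++ w₂) ++ v⟩
          ⟨nextStar g s r.output, σ ++ stackOf g s r.output, w₂ ++ v⟩ := by
        simpa [List.append_assoc] using hrun₁
      exact hrun₁'.trans hstep

lemma final_next_start : IsFinal g (next g (start g) (Symbol.nonterminal g.initial)) := by
  have h0 : ((none, [], [Symbol.nonterminal g.initial]) : DottedRule g) ∈ start g :=
    Closure.base rfl
  have := item_next h0
  simpa [IsFinal, finalDR] using this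

lemma raccepts_of_mem {w : List T} (hw : w ∈ g.language) : RAccepts g w := by
  rw [ContextFreeGrammar.mem_language_iff] at hw
  obtain ⟨n, hn⟩ := dsteps_of_derives hw
  have h0 : ((none, [], [Symbol.nonterminal g.initial] ++ []) : DottedRule g) ∈ start g := by
    exact Closure.base (by simp)
  have hrun := run_of_dsteps n [Symbol.nonterminal g.initial] w hn (start g) closedSt_start
    none [] [] h0 [] []
  refine ⟨next g (start g) (Symbol.nonterminal g.initial), final_next_start, ?_⟩
  simpa [nextStar] using hrun

/-! ### Soundness of the shift-reduce recognizer -/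

/-- The run invariant: states are sound and the stack symbols derive the consumed input. -/
def Inv (g : ContextFreeGrammar.{uN} T) (w : List T) (c : Cfg g) : Prop :=
  SoundSt g c.state ∧ (∀ p ∈ c.stack, SoundSt g p.1) ∧
  ∃ u : List T, w = u ++ c.input ∧
    g.Derives (c.stack.map Prod.snd) (u.map Symbol.terminal)

lemma inv_step {w : List T} {c c' : Cfg g} (h : Step g c c') (hI : Inv g w c) :
    Inv g w c' := by
  obtain ⟨hs, hstk, u, hu, hder⟩ := hI
  cases h with
  | inl hsh =>
    cases hsh with
    | @shift s σ x v hne =>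
      refine ⟨soundSt_next hs _, ?_, u ++ [x], ?_, ?_⟩
      · intro p hp
        rcases List.mem_append.mp hp with hp | hp
        · exact hstk p hp
        · simp only [List.mem_singleton] at hp
          rw [hp]
          exact hs
      · rw [hu]; simp
      · have := hder.append_right [Symbol.terminal x]
        simpa using this
  | inr hrd =>
    cases hrd with
    | @empty s σ v A hmem hne =>
      obtain ⟨r, hr, hri, hro⟩ := hs A [] [] hmem
      refine ⟨soundSt_next hs _, ?_, u, hu, ?_⟩
      · intro p hp
        rcases List.mem_append.mp hp with hp | hp
        · exact hstk p hp
        · simp only [List.mem_singleton] at hp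
          rw [hp]
          exact hs
      · have hpro : g.Produces (σ.map Prod.snd ++ [Symbol.nonterminal A]) (σ.map Prod.snd) := by
          refine ⟨r, hr, ?_⟩
          have := ContextFreeRule.rewrites_of_exists_parts r (σ.map Prod.snd) []
          rw [hri] at this
          simpa [hro] using this
        have := hpro.trans_derives (by simpa using hder :
          g.Derives (σ.map Prod.snd) (u.map Symbol.terminal))
        simpa using this
    | @pop s σ τ v A s₁ X₁ hmem hne =>
      have hs₁ : SoundSt g s₁ := by
        refine hstk (s₁, X₁) ?_
        simp
      obtain ⟨r, hr, hri, hro⟩ := hs A (X₁ :: τ.map Prod.snd) [] (by simpa using hmem)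
      refine ⟨soundSt_next hs₁ _, ?_, u, hu, ?_⟩
      · intro p hp
        rcases List.mem_append.mp hp with hp | hp
        · exact hstk p (List.mem_append.mpr (Or.inl hp))
        · simp only [List.mem_singleton] at hp
          rw [hp]
          exact hs₁
      · have hpro : g.Produces (σ.map Prod.snd ++ [Symbol.nonterminal A])
            (σ.map Prod.snd ++ X₁ :: τ.map Prod.snd) := by
          refine ⟨r, hr, ?_⟩
          have := ContextFreeRule.rewrites_of_exists_parts r (σ.map Prod.snd) []
          rw [hri] at this
          simpa [hro] using this
        have := hpro.trans_derives (by simpa using hder :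
          g.Derives (σ.map Prod.snd ++ X₁ :: τ.map Prod.snd) (u.map Symbol.terminal))
        simpa using this
  
lemma inv_run {w : List T} {c c' : Cfg g} (h : Relation.ReflTransGen (Step g) c c')
    (hI : Inv g w c) : Inv g w c' := by
  induction h with
  | refl => exact hI
  | tail _ hstep ih => exact inv_step hstep ih

lemma mem_of_raccepts {w : List T} (h : RAccepts g w) : w ∈ g.language := by
  obtain ⟨s, hf, hrun⟩ := h
  have hI0 : Inv g w ⟨start g, [], w⟩ :=
    ⟨soundSt_start, by simp, [], by simp, by simpa using Derives.refl ([] : List (Symbol T g.NT))⟩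
  obtain ⟨-, -, u, hu, hder⟩ := inv_run hrun hI0
  rw [ContextFreeGrammar.mem_language_iff]
  simp only [List.append_nil] at hu
  subst hu
  simpa using hder

lemma raccepts_iff_mem {w : List T} : RAccepts g w ↔ w ∈ g.language :=
  ⟨mem_of_raccepts, raccepts_of_mem⟩

/-! ### Projection of the unfolded recognizer onto `R(G)` -/

variable {E : LRState g → Stack g → Stack g → Prop}

/-- Projection of unfolded configurations onto configurations of `R(G)`. -/
def projC (c : UCfg g) : Cfg g :=
  ⟨c.state.1, c.stack.map (fun p => (p.1.1, p.2)), c.input⟩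

lemma proj_step {c c' : UCfg g} (h : UStep g E c c') : Step g (projC c) (projC c') := by
  cases h with
  | inl hsh =>
    cases hsh with
    | @shift p σ x v hne =>
      left
      have := ShiftStep.shift (g := g) (s := p.1) (σ := σ.map (fun p => (p.1.1, p.2)))
        (x := x) (w := v) hne
      simpa [projC, uNext] using this
  | inr hrd =>
    cases hrd with
    | @empty p σ v A hmem hne =>
      right
      have := ReduceStep.empty (g := g) (σ := σ.map (fun p => (p.1.1, p.2))) (w := v)
        hmem hne
      simpa [projC, uNext] using this
    | @pop p σ τ v A p₁ X₁ hmem hne =>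
      right
      have hmem' : (some A, (((p₁.1, X₁) :: τ.map (fun p => (p.1.1, p.2))).map Prod.snd),
          ([] : List (Symbol T g.NT))) ∈ p.1 := by
        simpa [Function.comp_def] using hmem
      have := ReduceStep.pop (g := g) (σ := σ.map (fun p => (p.1.1, p.2)))
        (τ := τ.map (fun p => (p.1.1, p.2))) (w := v) hmem' hne
      simpa [projC, uNext] using this

lemma raccepts_of_uaccepts {w : List T} (h : UAccepts g E w) : RAccepts g w := by
  obtain ⟨p, hf, hrun⟩ := h
  refine ⟨p.1, hf, ?_⟩
  have := hrun.lift projC (fun a b hab => proj_step hab)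
  simpa [projC, uStart, Function.onFun] using this

/-! ### Lifting runs of `R(G)` to the unfolded recognizer -/

/-- The equivalence class of `σ` at state `s` (as a set of stacks). -/
def cls (g : ContextFreeGrammar.{uN} T) (E : LRState g → Stack g → Stack g → Prop)
    (s : LRState g) (σ : Stack g) : Set (Stack g) :=
  {τ | Stacks g s τ ∧ E s τ σ}

/-- Lift a stack of `R(G)` to a stack of `R_≡`; `pre` is the part of the stack
below the segment being lifted. -/
def liftSt (g : ContextFreeGrammar.{uN} T) (E : LRState g → Stack g → Stack g → Prop) :
    Stack g → Stack g → List (UState g × Symbol T g.NT)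
  | _, [] => []
  | pre, (s, X) :: rest => ((s, cls g E s pre), X) :: liftSt g E (pre ++ [(s, X)]) rest

@[simp] lemma liftSt_nil {pre : Stack g} : liftSt g E pre [] = [] := rfl

@[simp] lemma liftSt_cons {pre : Stack g} {s : LRState g} {X : Symbol T g.NT} {rest : Stack g} :
    liftSt g E pre ((s, X) :: rest) =
      ((s, cls g E s pre), X) :: liftSt g E (pre ++ [(s, X)]) rest := rfl

lemma liftSt_append_cons {τ : Stack g} : ∀ {pre σ : Stack g} {s₁ : LRState g}
    {X₁ : Symbol T g.NT},
    liftSt g E pre (σ ++ (s₁, X₁) :: τ) =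
      liftSt g E pre σ ++ ((s₁, cls g E s₁ (pre ++ σ)), X₁) ::
        liftSt g E (pre ++ σ ++ [(s₁, X₁)]) τ := by
  intro pre σ
  induction σ generalizing pre with
  | nil => intro s₁ X₁; simp
  | cons hd tl ih =>
    intro s₁ X₁
    obtain ⟨q, Y⟩ := hd
    simp only [List.cons_append, liftSt_cons, ih, List.append_assoc]
    simp

lemma liftSt_append {pre σ : Stack g} {s₁ : LRState g} {X₁ : Symbol T g.NT} :
    liftSt g E pre (σ ++ [(s₁, X₁)]) =
      liftSt g E pre σ ++ [((s₁, cls g E s₁ (pre ++ σ)), X₁)] := by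
  have := liftSt_append_cons (E := E) (τ := ([] : Stack g)) (pre := pre) (σ := σ)
    (s₁ := s₁) (X₁ := X₁)
  simpa using this

lemma liftSt_map_snd {σ : Stack g} : ∀ {pre : Stack g},
    (liftSt g E pre σ).map Prod.snd = σ.map Prod.snd := by
  induction σ with
  | nil => intro pre; rfl
  | cons hd tl ih =>
    intro pre
    obtain ⟨q, Y⟩ := hd
    simp [ih]

/-- Lift a configuration of `R(G)`. -/
def liftC (g : ContextFreeGrammar.{uN} T) (E : LRState g → Stack g → Stack g → Prop)
    (c : Cfg g) : UCfg g :=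
  ⟨(c.state, cls g E c.state c.stack), liftSt g E [] c.stack, c.input⟩

lemma uNext_cls (hE : IsStackCongruence g E) {s : LRState g} {σ : Stack g}
    {X : Symbol T g.NT} (hσ : Stacks g s σ) (hne : next g s X ≠ ∅) :
    uNext g E (s, cls g E s σ) X =
      (next g s X, cls g E (next g s X) (σ ++ [(s, X)])) := by
  obtain ⟨hwf, hrefl, hsymm, htrans, hpush⟩ := hE
  unfold uNext cls
  refine Prod.ext rfl ?_
  ext τ
  simp only [Set.mem_setOf_eq]
  constructor
  · rintro ⟨hτ, ρ, ⟨hρst, hρE⟩, hτE⟩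
    exact ⟨hτ, htrans _ _ _ _ hτE (hpush _ _ _ _ hne hρE)⟩
  · rintro ⟨hτ, hτE⟩
    exact ⟨hτ, σ, ⟨hσ, hrefl _ _ hσ⟩, hτE⟩

/-- Valid stacks are preserved by moves of `R(G)`. -/
lemma stacks_prefix {s : LRState g} {ρ : Stack g} (h : Stacks g s ρ) :
    ∀ (σ τ : Stack g) (q : LRState g) (X : Symbol T g.NT),
      ρ = σ ++ (q, X) :: τ → Stacks g q σ := by
  induction h with
  | nil =>
    intro σ τ q X h
    exact absurd h (by simp)
  | @snoc q₀ σ₀ X₀ hst hne ih =>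
    intro σ τ q X h
    rcases τ.eq_nil_or_concat with rfl | ⟨τ', e, rfl⟩
    · have h1 : σ₀ = σ ∧ (q₀, X₀) = (q, X) := by
        have := List.append_inj' h (by rfl)
        simpa using this
      obtain ⟨rfl, h2⟩ := h1
      obtain ⟨rfl, rfl⟩ := Prod.mk.injEq .. ▸ h2
      exact hst
    · have h1 : σ₀ = σ ++ (q, X) :: τ' := by
        have : σ₀ ++ [(q₀, X₀)] = (σ ++ (q, X) :: τ') ++ [e] := by
          rw [h]; simp
        exact (List.append_inj' this (by rfl)).1
      exact ih σ τ' q X h1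

lemma stacks_step {c c' : Cfg g} (h : Step g c c') (hv : Stacks g c.state c.stack) :
    Stacks g c'.state c'.stack := by
  cases h with
  | inl hsh =>
    cases hsh with
    | shift hne => exact Stacks.snoc hv hne
  | inr hrd =>
    cases hrd with
    | empty hmem hne => exact Stacks.snoc hv hne
    | @pop s σ τ v A s₁ X₁ hmem hne =>
      exact Stacks.snoc (stacks_prefix hv σ τ s₁ X₁ rfl) hne

lemma lift_step (hE : IsStackCongruence g E) {c c' : Cfg g}
    (hv : Stacks g c.state c.stack) (h : Step g c c') :
    UStep g E (liftC g E c) (liftC g E c') := by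
  cases h with
  | inl hsh =>
    cases hsh with
    | @shift s σ x v hne =>
      left
      have step := UShiftStep.shift (g := g) (E := E) (p := (s, cls g E s σ))
        (σ := liftSt g E [] σ) (x := x) (w := v) hne
      have e1 := uNext_cls hE hv hne
      have e2 : liftSt g E [] (σ ++ [(s, Symbol.terminal x)]) =
          liftSt g E [] σ ++ [((s, cls g E s σ), Symbol.terminal x)] := by
        simpa using liftSt_append (E := E) (pre := []) (σ := σ)
      rw [e1] at step
      show UShiftStep g E ⟨(s, cls g E s σ), liftSt g E [] σ, x :: v⟩ _
      rw [show liftC g E ⟨next g s (Symbol.terminal x), σ ++ [(s, Symbol.terminal x)], v⟩ =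
        ⟨(next g s (Symbol.terminal x),
          cls g E (next g s (Symbol.terminal x)) (σ ++ [(s, Symbol.terminal x)])),
          liftSt g E [] σ ++ [((s, cls g E s σ), Symbol.terminal x)], v⟩ from by
        simp [liftC, e2]]
      exact step
  | inr hrd =>
    cases hrd with
    | @empty s σ v A hmem hne =>
      right
      have step := UReduceStep.empty (g := g) (E := E) (p := (s, cls g E s σ))
        (σ := liftSt g E [] σ) (w := v) (A := A) hmem hne
      have e1 := uNext_cls hE hv hne
      have e2 : liftSt g E [] (σ ++ [(s, Symbol.nonterminal A)]) =
          liftSt g E [] σ ++ [((s, cls g E s σ), Symbol.nonterminal A)] := by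
        simpa using liftSt_append (E := E) (pre := []) (σ := σ)
      rw [e1] at step
      show UReduceStep g E ⟨(s, cls g E s σ), liftSt g E [] σ, v⟩ _
      rw [show liftC g E ⟨next g s (Symbol.nonterminal A), σ ++ [(s, Symbol.nonterminal A)], v⟩ =
        ⟨(next g s (Symbol.nonterminal A),
          cls g E (next g s (Symbol.nonterminal A)) (σ ++ [(s, Symbol.nonterminal A)])),
          liftSt g E [] σ ++ [((s, cls g E s σ), Symbol.nonterminal A)], v⟩ from by
        simp [liftC, e2]]
      exact step
    | @pop s σ τ v A s₁ X₁ hmem hne =>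
      right
      have hv₁ : Stacks g s₁ σ := stacks_prefix hv σ τ s₁ X₁ rfl
      have hmem' : (some A,
          ((((s₁, cls g E s₁ σ), X₁) :: liftSt g E (σ ++ [(s₁, X₁)]) τ).map Prod.snd),
          ([] : List (Symbol T g.NT))) ∈ s := by
        simpa [liftSt_map_snd] using hmem
      have step := UReduceStep.pop (g := g) (E := E)
        (p := (s, cls g E s (σ ++ (s₁, X₁) :: τ)))
        (σ := liftSt g E [] σ) (τ := liftSt g E (σ ++ [(s₁, X₁)]) τ) (w := v) (A := A)
        (p₁ := (s₁, cls g E s₁ σ)) (X₁ := X₁) hmem' hne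
      have e1 := uNext_cls hE hv₁ hne
      have e0 : liftSt g E [] (σ ++ (s₁, X₁) :: τ) =
          liftSt g E [] σ ++ ((s₁, cls g E s₁ σ), X₁) :: liftSt g E (σ ++ [(s₁, X₁)]) τ := by
        simpa using liftSt_append_cons (E := E) (τ := τ) (pre := []) (σ := σ)
          (s₁ := s₁) (X₁ := X₁)
      have e2 : liftSt g E [] (σ ++ [(s₁, Symbol.nonterminal A)]) =
          liftSt g E [] σ ++ [((s₁, cls g E s₁ σ), Symbol.nonterminal A)] := by
        simpa using liftSt_append (E := E) (pre := []) (σ := σ)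
      rw [e1] at step
      show UReduceStep g E ⟨(s, cls g E s (σ ++ (s₁, X₁) :: τ)),
        liftSt g E [] (σ ++ (s₁, X₁) :: τ), v⟩ _
      rw [e0]
      rw [show liftC g E ⟨next g s₁ (Symbol.nonterminal A), σ ++ [(s₁, Symbol.nonterminal A)], v⟩ =
        ⟨(next g s₁ (Symbol.nonterminal A),
          cls g E (next g s₁ (Symbol.nonterminal A)) (σ ++ [(s₁, Symbol.nonterminal A)])),
          liftSt g E [] σ ++ [((s₁, cls g E s₁ σ), Symbol.nonterminal A)], v⟩ from by
        simp [liftC, e2]]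
      exact step

lemma stacks_run {c c' : Cfg g} (h : Relation.ReflTransGen (Step g) c c')
    (hv : Stacks g c.state c.stack) : Stacks g c'.state c'.stack := by
  induction h with
  | refl => exact hv
  | tail _ hs ih => exact stacks_step hs ih

lemma lift_run (hE : IsStackCongruence g E) {c c' : Cfg g}
    (h : Relation.ReflTransGen (Step g) c c') (hv : Stacks g c.state c.stack) :
    Relation.ReflTransGen (UStep g E) (liftC g E c) (liftC g E c') := by
  induction h with
  | refl => exact Relation.ReflTransGen.refl
  | tail hr hstep ih =>
    exact ih.tail (lift_step hE (stacks_run hr hv) hstep)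

lemma uaccepts_of_raccepts (hE : IsStackCongruence g E) {w : List T}
    (h : RAccepts g w) : UAccepts g E w := by
  obtain ⟨s, hf, hrun⟩ := h
  have hrun' := lift_run hE hrun Stacks.nil
  refine ⟨(s, cls g E s [(start g, Symbol.nonterminal g.initial)]), hf, ?_⟩
  have e1 : liftC g E ⟨start g, [], w⟩ = ⟨uStart g E, [], w⟩ := rfl
  have e2 : liftC g E ⟨s, [(start g, Symbol.nonterminal g.initial)], []⟩ =
      ⟨(s, cls g E s [(start g, Symbol.nonterminal g.initial)]),
        [(uStart g E, Symbol.nonterminal g.initial)], []⟩ := rfl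
  rw [e1, e2] at hrun'
  exact hrun'

end Aux

end LRApprox

open LRApprox

/-- For any CFG `G` and any stack congruence `≡` on the LR(0)
shift-reduce recognizer `R(G)`, the unfolded recognizer `R_≡` accepts exactly
the same strings as `R(G)`; in particular, `R_≡` accepts exactly `L(G)`. -/
theorem unfolded_recognizer_equivalent {T : Type*} (g : LRApprox.ContextFreeGrammar T)
    (E : LRState g → Stack g → Stack g → Prop)
    (hE : IsStackCongruence g E) :
    (∀ w : List T, UAccepts g E w ↔ RAccepts g w) ∧
    (∀ w : List T, UAccepts g E w ↔ w ∈ g.language) := by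
  have h1 : ∀ w : List T, UAccepts g E w ↔ RAccepts g w :=
    fun w => ⟨raccepts_of_uaccepts, uaccepts_of_raccepts hE⟩
  exact ⟨h1, fun w => (h1 w).trans raccepts_iff_mem⟩
end

section
/- For any context-free grammar G, if a configuration ⟨s,σ,w⟩ of the shift-reduce recognizer R(G) is reachable by a sequence of moves from an initial configuration, then σ ∈ Stacks(s). -/
open LRApprox

/-- If a configuration `⟨s, σ, w⟩` of the shift-reduce
recognizer `R(G)` is reachable by a sequence of moves from an initial
configuration, then `σ ∈ Stacks(s)`. -/
theorem stack_of_reachable_configuration {T : Type*} (g : LRApprox.ContextFreeGrammar T) :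
    ∀ (w : List T) (c : Cfg g),
      Relation.ReflTransGen (Step g) ⟨start g, [], w⟩ c →
      Stacks g c.state c.stack := by
  have prefix_lemma : ∀ (s : LRState g) (ρ : Stack g), Stacks g s ρ →
      ∀ (σ τ : Stack g) (q : LRState g) (X : Symbol T g.NT),
        ρ = σ ++ (q, X) :: τ → Stacks g q σ := by
    intro s ρ h
    induction h with
    | nil =>
      intro σ τ q X he
      exact absurd he (by simp)
    | @snoc q₀ σ₀ X₀ hst hne ih =>
      intro σ τ q X he
      rcases List.eq_nil_or_concat τ with rfl | ⟨τ', p, rfl⟩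
      · obtain ⟨rfl, h2⟩ := List.append_inj' he rfl
        obtain ⟨rfl, rfl⟩ : q₀ = q ∧ X₀ = X := by
          simpa [Prod.ext_iff] using h2
        exact hst
      · have h2 : σ₀ ++ [(q₀, X₀)] = (σ ++ (q, X) :: τ') ++ [p] := by
          simpa using he
        obtain ⟨h3, _⟩ := List.append_inj' h2 rfl
        exact ih σ τ' q X h3
  intro w c h
  induction h with
  | refl => exact Stacks.nil
  | tail _ hstep ih =>
    rcases hstep with hs | hr
    · cases hs with
      | shift hne => exact Stacks.snoc ih hne
    · cases hr with
      | empty _ hne => exact Stacks.snoc ih hne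
      | @pop s σ τ w A s₁ X₁ _ hne =>
        have hσ : Stacks g s₁ σ := prefix_lemma _ _ ih σ τ s₁ X₁ rfl
        exact Stacks.snoc hσ hne
end

section
/- Every collapsible stack σ immediately collapses to a unique stack C(σ); that is, there is exactly one stack σ' such that σ immediately collapses to σ'. -/
open LRApprox

/-- Every collapsible stack `σ` immediately collapses to a
unique stack `C(σ)`. -/
theorem immediate_collapse_unique {T : Type*} (g : LRApprox.ContextFreeGrammar T) :
    ∀ σ : Stack g, Collapsible g σ →
      ∃! σ' : Stack g, ImmediatelyCollapses g σ σ' := by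
  classical
  -- uniqueness lemma first
  have huniq : ∀ σ a b : Stack g, ImmediatelyCollapses g σ a →
      ImmediatelyCollapses g σ b → a = b := by
    intro σ a b ha hb
    obtain ⟨ρ, τ, υ, hσ, ha', hmin, hneg⟩ := ha
    obtain ⟨ρ', τ', υ', hσ', hb', hmin', hneg'⟩ := hb
    have hρσ : ρ <+: σ := ⟨τ ++ υ, by rw [hσ, List.append_assoc]⟩
    have hρ'σ : ρ' <+: σ := ⟨τ' ++ υ', by rw [hσ', List.append_assoc]⟩
    have hρeq : ρ = ρ' := by
      rcases List.prefix_or_prefix_of_prefix hρσ hρ'σ with h | h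
      · by_contra hne
        exact hneg' ⟨ρ, τ, υ, hσ, h, hne, hmin.1⟩
      · by_contra hne
        exact hneg ⟨ρ', τ', υ', hσ', h, fun e => hne e.symm, hmin'.1⟩
    subst hρeq
    have hrest : τ ++ υ = τ' ++ υ' := by
      have := hσ.symm.trans hσ'
      rw [List.append_assoc, List.append_assoc] at this
      exact List.append_cancel_left this
    have hτeq : τ = τ' := by
      have hτp : τ <+: τ ++ υ := ⟨υ, rfl⟩
      have hτ'p : τ' <+: τ ++ υ := ⟨υ', hrest.symm⟩
      rcases List.prefix_or_prefix_of_prefix hτp hτ'p with h | h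
      · by_contra hne
        exact hmin'.2 τ h hne hmin.1
      · by_contra hne
        exact hmin.2 τ' h (fun e => hne e.symm) hmin'.1
    subst hτeq
    have hυeq : υ = υ' := List.append_cancel_left hrest
    rw [ha', hb', hυeq]
  intro σ hcol
  obtain ⟨ρ0, τ0, υ0, hσ0, hloop0⟩ := hcol
  -- least prefix length admitting a loop
  have hP : ∃ k, ∃ τ υ : Stack g, σ = σ.take k ++ τ ++ υ ∧ IsLoop g τ := by
    refine ⟨ρ0.length, τ0, υ0, ?_, hloop0⟩
    rw [hσ0, List.append_assoc, List.take_left, ← List.append_assoc]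
  set k := Nat.find hP with hk
  -- least loop length at that position
  have hQ : ∃ m, ∃ τ υ : Stack g, τ.length = m ∧
      σ = σ.take k ++ τ ++ υ ∧ IsLoop g τ := by
    obtain ⟨τ, υ, h1, h2⟩ := Nat.find_spec hP
    exact ⟨τ.length, τ, υ, rfl, h1, h2⟩
  obtain ⟨τ, υ, hτlen, hσdec, hτloop⟩ := Nat.find_spec hQ
  have hτmin : IsMinimalLoop g τ := by
    refine ⟨hτloop, fun τ' hpre hne hloop' => ?_⟩
    have hlt : τ'.length < τ.length := by
      have hle : τ'.length ≤ τ.length := hpre.length_le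
      rcases lt_or_eq_of_le hle with h | h
      · exact h
      · exact absurd (hpre.eq_of_length h) hne
    obtain ⟨w, hw⟩ := hpre
    rw [hτlen] at hlt
    exact Nat.find_min hQ hlt ⟨τ', w ++ υ, rfl, by
      nth_rewrite 1 [hσdec]
      rw [← hw]
      simp [List.append_assoc], hloop'⟩
  refine ⟨σ.take k ++ υ, ⟨σ.take k, τ, υ, hσdec, rfl, hτmin, ?_⟩, ?_⟩
  · rintro ⟨ρ', τ', υ', hσ', hpre, hne, hloop'⟩
    have htakeσ : σ.take k <+: σ := List.take_prefix k σ
    have hlt : ρ'.length < k := by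
      have h1 : ρ'.length < (σ.take k).length := by
        rcases lt_or_eq_of_le hpre.length_le with h | h
        · exact h
        · exact absurd (hpre.eq_of_length h) hne
      calc ρ'.length < (σ.take k).length := h1
        _ ≤ k := by simp [List.length_take]
    have hρ'σ : ρ' <+: σ := hpre.trans htakeσ
    have : σ.take ρ'.length = ρ' := by
      obtain ⟨w, hw⟩ := hρ'σ
      rw [← hw, List.take_left' rfl]
    exact Nat.find_min hP hlt ⟨τ', υ', by rw [this, ← hσ'], hloop'⟩
  · intro y hy
    exact huniq σ y (σ.take k ++ υ)
      hy ⟨σ.take k, τ, υ, hσdec, rfl, hτmin, by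
        rintro ⟨ρ', τ', υ', hσ', hpre, hne, hloop'⟩
        have htakeσ : σ.take k <+: σ := List.take_prefix k σ
        have hlt : ρ'.length < k := by
          have h1 : ρ'.length < (σ.take k).length := by
            rcases lt_or_eq_of_le hpre.length_le with h | h
            · exact h
            · exact absurd (hpre.eq_of_length h) hne
          calc ρ'.length < (σ.take k).length := h1
            _ ≤ k := by simp [List.length_take]
        have hρ'σ : ρ' <+: σ := hpre.trans htakeσ
        have : σ.take ρ'.length = ρ' := by
          obtain ⟨w, hw⟩ := hρ'σ
          rw [← hw, List.take_left' rfl]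
        exact Nat.find_min hP hlt ⟨τ', υ', by rw [this, ← hσ'], hloop'⟩⟩
end

section
/- Every equivalence class of the collapsing equivalence on stacks contains exactly one uncollapsible stack, which is the unique shortest stack in the class; hence each class has a canonical uncollapsible representative. -/
open LRApprox

section Aux

variable {T : Type*} {g : LRApprox.ContextFreeGrammar T}

lemma loop_ne_nil {τ : Stack g} (h : IsLoop g τ) : τ ≠ [] := by
  obtain ⟨p, q, hp, -⟩ := h
  intro h; subst h; simp at hp

lemma ic_collapsible {σ σ' : Stack g} (h : ImmediatelyCollapses g σ σ') :
    Collapsible g σ := by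
  obtain ⟨ρ, τ, υ, hσ, -, hm, -⟩ := h
  exact ⟨ρ, τ, υ, hσ, hm.1⟩

lemma ic_length {σ σ' : Stack g} (h : ImmediatelyCollapses g σ σ') :
    σ'.length < σ.length := by
  obtain ⟨ρ, τ, υ, hσ, hσ', hm, -⟩ := h
  have hτ : 0 < τ.length := List.length_pos_iff.mpr (loop_ne_nil hm.1)
  subst hσ hσ'; simp; omega

lemma collapses_length {σ τ : Stack g} (h : Collapses g σ τ) :
    τ.length ≤ σ.length := by
  induction h with
  | refl => exact le_rfl
  | tail _ hstep ih => exact le_trans (le_of_lt (ic_length hstep)) ih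

lemma progress {σ : Stack g} (h : Collapsible g σ) :
    ∃ σ', ImmediatelyCollapses g σ σ' := by
  classical
  obtain ⟨ρ0, τ0, υ0, hσ0, hloop0⟩ := h
  have hP : ∃ n, ∃ ρ τ υ : Stack g, σ = ρ ++ τ ++ υ ∧ IsLoop g τ ∧ ρ.length = n :=
    ⟨ρ0.length, ρ0, τ0, υ0, hσ0, hloop0, rfl⟩
  obtain ⟨ρ, τ1, υ1, hσ1, hloop1, hlenρ⟩ := Nat.find_spec hP
  have hQ : ∃ m, ∃ τ υ : Stack g, σ = ρ ++ τ ++ υ ∧ IsLoop g τ ∧ τ.length = m :=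
    ⟨τ1.length, τ1, υ1, hσ1, hloop1, rfl⟩
  obtain ⟨τ, υ, hστ, hloopτ, hlenτ⟩ := Nat.find_spec hQ
  refine ⟨ρ ++ υ, ρ, τ, υ, hστ, rfl, ⟨hloopτ, ?_⟩, ?_⟩
  · intro τ' hpre hne hloop'
    obtain ⟨rest, hrest⟩ := id hpre
    have hlt : τ'.length < τ.length :=
      lt_of_le_of_ne hpre.length_le (fun h => hne (hpre.eq_of_length h))
    refine Nat.find_min hQ (hlenτ ▸ hlt) ⟨τ', rest ++ υ, ?_, hloop', rfl⟩
    rw [hστ, ← hrest]; simp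
  · rintro ⟨ρ', τ', υ', hσ', hpre', hne', hloop''⟩
    have hlt : ρ'.length < ρ.length :=
      lt_of_le_of_ne hpre'.length_le (fun h => hne' (hpre'.eq_of_length h))
    exact Nat.find_min hP (hlenρ ▸ hlt) ⟨ρ', τ', υ', hσ', hloop'', rfl⟩

lemma ic_det {σ σ₁ σ₂ : Stack g} (h1 : ImmediatelyCollapses g σ σ₁)
    (h2 : ImmediatelyCollapses g σ σ₂) : σ₁ = σ₂ := by
  obtain ⟨ρ1, τ1, υ1, e1, e1', m1, n1⟩ := h1
  obtain ⟨ρ2, τ2, υ2, e2, e2', m2, n2⟩ := h2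
  have pre1 : ρ1 <+: σ := ⟨τ1 ++ υ1, by rw [e1]; simp⟩
  have pre2 : ρ2 <+: σ := ⟨τ2 ++ υ2, by rw [e2]; simp⟩
  have hρ : ρ1 = ρ2 := by
    rcases List.prefix_or_prefix_of_prefix pre1 pre2 with h | h
    · by_contra hne; exact n2 ⟨ρ1, τ1, υ1, e1, h, hne, m1.1⟩
    · by_contra hne; exact n1 ⟨ρ2, τ2, υ2, e2, h, Ne.symm hne, m2.1⟩
  subst hρ
  have etu : τ1 ++ υ1 = τ2 ++ υ2 := by
    have := e1.symm.trans e2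
    simpa using this
  have pτ1 : τ1 <+: τ1 ++ υ1 := List.prefix_append _ _
  have pτ2 : τ2 <+: τ1 ++ υ1 := etu ▸ List.prefix_append _ _
  have hτ : τ1 = τ2 := by
    rcases List.prefix_or_prefix_of_prefix pτ1 pτ2 with h | h
    · by_contra hne; exact m2.2 τ1 h hne m1.1
    · by_contra hne; exact m1.2 τ2 h (Ne.symm hne) m2.1
  subst hτ
  have hυ : υ1 = υ2 := List.append_cancel_left etu
  rw [e1', e2', hυ]

lemma coll_normalize (σ : Stack g) : ∃ τ : Stack g, ¬ Collapsible g τ ∧ Collapses g σ τ := by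
  induction' hn : σ.length using Nat.strong_induction_on with n ih generalizing σ
  by_cases hc : Collapsible g σ
  · obtain ⟨σ', hσ'⟩ := progress hc
    obtain ⟨τ, hτ, hcol⟩ := ih σ'.length (hn ▸ ic_length hσ') σ' rfl
    exact ⟨τ, hτ, Relation.ReflTransGen.head hσ' hcol⟩
  · exact ⟨σ, hc, Relation.ReflTransGen.refl⟩

lemma coll_nf_unique : ∀ σ τ₁ τ₂ : Stack g, Collapses g σ τ₁ → Collapses g σ τ₂ →
    ¬ Collapsible g τ₁ → ¬ Collapsible g τ₂ → τ₁ = τ₂ := by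
  intro σ
  induction' hn : σ.length using Nat.strong_induction_on with n ih generalizing σ
  intro τ₁ τ₂ h1 h2 u1 u2
  rcases h1.cases_head with rfl | ⟨σ', hs, h1'⟩
  · rcases h2.cases_head with rfl | ⟨σ', hs, -⟩
    · rfl
    · exact absurd (ic_collapsible hs) u1
  · rcases h2.cases_head with rfl | ⟨σ'', hs', h2'⟩
    · exact absurd (ic_collapsible hs) u2
    · have := ic_det hs hs'
      subst this
      exact ih σ'.length (hn ▸ ic_length hs) σ' rfl τ₁ τ₂ h1' h2' u1 u2

lemma collapses_nf {σ τ : Stack g} (h : Collapses g σ τ) (hu : ¬ Collapsible g σ) :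
    σ = τ := by
  rcases h.cases_head with rfl | ⟨σ', hs, -⟩
  · rfl
  · exact absurd (ic_collapsible hs) hu

lemma collapses_length_lt {σ τ : Stack g} (h : Collapses g σ τ) (hne : σ ≠ τ) :
    τ.length < σ.length := by
  rcases h.cases_head with rfl | ⟨σ', hs, h'⟩
  · exact absurd rfl hne
  · exact lt_of_le_of_lt (collapses_length h') (ic_length hs)

end Aux


/-- Every equivalence class of the collapsing equivalence
contains exactly one uncollapsible stack, which is the unique shortest stack
in the class. -/
theorem unique_uncollapsible_representative {T : Type*} (g : LRApprox.ContextFreeGrammar T) :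
    ∀ σ : Stack g, ∃ τ : Stack g,
      ¬ Collapsible g τ ∧ CollEquiv g σ τ ∧
      (∀ τ' : Stack g, ¬ Collapsible g τ' → CollEquiv g σ τ' → τ' = τ) ∧
      (∀ τ' : Stack g, CollEquiv g σ τ' → τ' ≠ τ → τ.length < τ'.length) := by
  intro σ
  obtain ⟨τ, hτ, hcol⟩ := coll_normalize σ
  refine ⟨τ, hτ, ⟨τ, hτ, hcol, Relation.ReflTransGen.refl⟩, ?_, ?_⟩
  · rintro τ' hτ' ⟨υ, hυ, hσυ, hτ'υ⟩
    have h1 : τ' = υ := collapses_nf hτ'υ hτ'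
    subst h1
    exact coll_nf_unique σ τ' τ hσυ hcol hτ' hτ
  · rintro τ' ⟨υ, hυ, hσυ, hτ'υ⟩ hne
    have h1 : υ = τ := coll_nf_unique σ υ τ hσυ hcol hυ hτ
    subst h1
    exact collapses_length_lt hτ'υ hne
end

section
/- For any context-free grammar G, there are only finitely many uncollapsible stacks over the state set of M(G); consequently, the collapsing equivalence has finitely many equivalence classes and the recognizer unfolded by the collapsing congruence has finitely many states. -/
namespace LRAux

open LRApprox

variable {T : Type*} {g : LRApprox.ContextFreeGrammar T}

/-- The finite set of all possible dotted rules. -/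
def Dset (g : LRApprox.ContextFreeGrammar T) : Set (DottedRule g) :=
  {((none : Option g.NT), ([] : List (Symbol T g.NT)), [Symbol.nonterminal g.initial]),
    ((none : Option g.NT), [Symbol.nonterminal g.initial], ([] : List (Symbol T g.NT)))} ∪
    ⋃ r ∈ {r | r ∈ g.rules},
      (fun n => ((some r.input : Option g.NT), r.output.take n, r.output.drop n)) ''
        Set.Iic r.output.length

lemma dset_finite (g : LRApprox.ContextFreeGrammar T) : (Dset g).Finite :=
  Set.Finite.union ((Set.finite_singleton _).insert _)
    (Set.Finite.biUnion g.rules.finite_toSet fun r _ => (Set.finite_Iic _).image _)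

/-- The finite set of all relevant symbols. -/
def SymSet (g : LRApprox.ContextFreeGrammar T) : Set (Symbol T g.NT) :=
  {Symbol.nonterminal g.initial} ∪ ⋃ r ∈ {r | r ∈ g.rules}, {x | x ∈ r.output}

lemma symset_finite (g : LRApprox.ContextFreeGrammar T) : (SymSet g).Finite :=
  Set.Finite.union (Set.finite_singleton _)
    (Set.Finite.biUnion g.rules.finite_toSet fun r _ => r.output.finite_toSet)

lemma shift_mem {A : Option g.NT} {α β : List (Symbol T g.NT)} {X : Symbol T g.NT}
    (h : (A, α, X :: β) ∈ Dset g) :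
    (A, α ++ [X], β) ∈ Dset g ∧ X ∈ SymSet g := by
  rcases (Set.mem_union _ _ _).1 h with h | h
  · rcases Set.mem_insert_iff.1 h with h | h
    · rw [Prod.ext_iff] at h
      obtain ⟨h1, h2⟩ := h
      rw [Prod.ext_iff] at h2
      obtain ⟨h2, h3⟩ := h2
      simp only at h1 h2 h3
      obtain ⟨h4, rfl⟩ : Symbol.nonterminal g.initial = X ∧ β = ([] : List (Symbol T g.NT)) := by
        simpa using h3.symm
      subst h4
      subst h1; subst h2
      exact ⟨Or.inl (Or.inr rfl), Or.inl rfl⟩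
    · rw [Set.mem_singleton_iff, Prod.ext_iff] at h
      obtain ⟨h1, h2⟩ := h
      rw [Prod.ext_iff] at h2
      obtain ⟨h2, h3⟩ := h2
      simp only at h3
      exact absurd h3 (List.cons_ne_nil _ _)
  · simp only [Set.mem_iUnion, Set.mem_image, Set.mem_setOf_eq, Set.mem_Iic] at h
    obtain ⟨r, hr, n, hn, heqd⟩ := h
    rw [Prod.ext_iff] at heqd
    obtain ⟨h1, h2⟩ := heqd
    rw [Prod.ext_iff] at h2
    obtain ⟨h2, h3⟩ := h2
    simp only at h1 h2 h3
    have h1 := h1.symm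
    have h2 := h2.symm
    have h3 := h3.symm
    subst h1; subst h2
    have hn' : n < r.output.length := by
      by_contra hge
      push_neg at hge
      rw [List.drop_eq_nil_iff.2 hge] at h3
      exact List.cons_ne_nil _ _ h3
    have hget : r.output[n]? = some X := by
      rw [← List.head?_drop, ← h3]; rfl
    constructor
    · right
      simp only [Set.mem_iUnion, Set.mem_image, Set.mem_setOf_eq]
      refine ⟨r, hr, n + 1, hn', ?_⟩
      have ht : r.output.take (n + 1) = r.output.take n ++ [X] := by
        rw [List.take_succ, hget]; rfl
      have hd : r.output.drop (n + 1) = β := by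
        rw [← List.tail_drop, ← h3]; rfl
      rw [ht, hd]
    · right
      simp only [Set.mem_iUnion, Set.mem_setOf_eq]
      exact ⟨r, hr, List.mem_of_mem_drop (show X ∈ r.output.drop n by
        rw [← h3]; exact List.mem_cons_self)⟩

lemma closure_subset_dset {R : Set (DottedRule g)} (hR : R ⊆ Dset g) :
    ∀ {d}, Closure g R d → d ∈ Dset g := by
  intro d h
  induction h with
  | base hd => exact hR hd
  | @step A α β B r _ hr hB _ =>
    subst hB
    right
    simp only [Set.mem_iUnion, Set.mem_image, Set.mem_setOf_eq]
    exact ⟨r, hr, 0, by simp, by simp⟩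

lemma start_subset : LRApprox.start g ⊆ Dset g := by
  intro d hd
  refine closure_subset_dset ?_ hd
  intro x hx
  rw [Set.mem_singleton_iff] at hx
  subst hx
  exact Or.inl (Or.inl rfl)

lemma next_subset {s : LRState g} {X : Symbol T g.NT} (hs : s ⊆ Dset g) :
    next g s X ⊆ Dset g := by
  intro d hd
  refine closure_subset_dset ?_ hd
  rintro d' ⟨A, α, β, h1, rfl⟩
  exact (shift_mem (hs h1)).1

lemma exists_of_next_ne_empty {s : LRState g} {X : Symbol T g.NT} (h : next g s X ≠ ∅) :
    ∃ A α β, (A, α, X :: β) ∈ s := by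
  obtain ⟨d, hd⟩ := Set.nonempty_iff_ne_empty.2 h
  simp only [next, Set.mem_setOf_eq] at hd
  induction hd with
  | base hd => obtain ⟨A, α, β, h1, _⟩ := hd; exact ⟨A, α, β, h1⟩
  | @step A α β B r _ hr hB ih => exact ih

lemma stacks_state_subset {s : LRState g} {σ : Stack g} (h : Stacks g s σ) : s ⊆ Dset g := by
  induction h with
  | nil => exact start_subset
  | snoc _ _ ih => exact next_subset ih

/-- The finite set of possible stack entries. -/
def PSet (g : LRApprox.ContextFreeGrammar T) : Set (LRState g × Symbol T g.NT) :=
  {e | e.1 ⊆ Dset g ∧ e.2 ∈ SymSet g}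

lemma pset_finite (g : LRApprox.ContextFreeGrammar T) : (PSet g).Finite := by
  refine (((dset_finite g).finite_subsets).prod (symset_finite g)).subset ?_
  intro e he
  exact ⟨he.1, he.2⟩

lemma stacks_entries {s : LRState g} {σ : Stack g} (h : Stacks g s σ) :
    ∀ e ∈ σ, e ∈ PSet g := by
  induction h with
  | nil => simp
  | @snoc q σ' X h hne ih =>
    intro e he
    rcases List.mem_append.1 he with he | he
    · exact ih e he
    · have he' : e = (q, X) := by simpa using he
      subst he'
      refine ⟨stacks_state_subset h, ?_⟩
      obtain ⟨A, α, β, hm⟩ := exists_of_next_ne_empty hne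
      exact (shift_mem (stacks_state_subset h hm)).2

/-- The chain relation between adjacent stack entries. -/
def SRel (g : LRApprox.ContextFreeGrammar T) :
    (LRState g × Symbol T g.NT) → (LRState g × Symbol T g.NT) → Prop :=
  fun a b => next g a.1 a.2 = b.1

lemma stacks_chain {s : LRState g} {σ : Stack g} (h : Stacks g s σ) :
    σ.Chain' (SRel g) ∧ ∀ e ∈ σ.getLast?, next g e.1 e.2 = s := by
  induction h with
  | nil => exact ⟨List.isChain_nil, by simp⟩
  | @snoc q σ' X h hne ih =>
    obtain ⟨hc, hl⟩ := ih
    constructor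
    · refine List.isChain_append.2 ⟨hc, List.isChain_singleton _, ?_⟩
      intro x hx y hy
      have hy' : (q, X) = y := by simpa using hy
      subst hy'
      exact hl x hx
    · intro e he
      rw [List.getLast?_append] at he
      have he' : (q, X) = e := by simpa using he
      subst he'
      rfl

lemma collapsible_of_dup {σ : Stack g} (hc : σ.Chain' (SRel g))
    {i j : ℕ} (hij : i < j) (hj : j < σ.length)
    (heq : (σ[i]'(by omega)).1 = (σ[j]'hj).1) : Collapsible g σ := by
  refine ⟨σ.take i, (σ.drop i).take (j - i), σ.drop j, ?_, ?_⟩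
  · rw [List.append_assoc]
    conv_lhs => rw [← List.take_append_drop i σ]
    congr 1
    conv_lhs => rw [← List.take_append_drop (j - i) (σ.drop i)]
    congr 1
    rw [List.drop_drop]
    congr 1
    omega
  · obtain ⟨j', rfl⟩ : ∃ j', j = j' + 1 := ⟨j - 1, by omega⟩
    have hlen : ((σ.drop i).take (j' + 1 - i)).length = j' + 1 - i := by
      simp only [List.length_take, List.length_drop]
      omega
    refine ⟨σ[i]'(by omega), σ[j']'(by omega), ?_, ?_, ?_⟩
    · rw [List.head?_eq_getElem?, List.getElem?_take, if_pos (by omega : 0 < j' + 1 - i),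
        List.getElem?_drop, show i + 0 = i from rfl,
        List.getElem?_eq_getElem (by omega : i < σ.length)]
    · rw [List.getLast?_eq_getElem?, hlen, List.getElem?_take,
        if_pos (by omega : j' + 1 - i - 1 < j' + 1 - i),
        List.getElem?_drop,
        show i + (j' + 1 - i - 1) = j' by omega,
        List.getElem?_eq_getElem (by omega : j' < σ.length)]
    · have hch := List.isChain_iff_getElem.1 hc j' (by omega)
      exact hch.trans heq.symm

lemma nodup_of_uncollapsible {σ : Stack g} (hc : σ.Chain' (SRel g)) (hu : ¬ Collapsible g σ) :
    (σ.map Prod.fst).Nodup := by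
  rw [List.nodup_iff_injective_get]
  intro a b hab
  have ha : (a : ℕ) < σ.length := by simpa using a.2
  have hb : (b : ℕ) < σ.length := by simpa using b.2
  simp only [List.get_eq_getElem, List.getElem_map] at hab
  rcases lt_trichotomy (a : ℕ) (b : ℕ) with h | h | h
  · exact absurd (collapsible_of_dup hc h hb hab) hu
  · exact Fin.ext h
  · exact absurd (collapsible_of_dup hc h ha hab.symm) hu

lemma finite_bounded_lists {α : Type*} {P : Set α} (hP : P.Finite) (n : ℕ) :
    {l : List α | (∀ x ∈ l, x ∈ P) ∧ l.length ≤ n}.Finite := by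
  haveI := hP.to_subtype
  apply ((List.finite_length_le {x // x ∈ P} n).image (List.map Subtype.val)).subset
  rintro l ⟨hl, hn⟩
  refine ⟨l.pmap (fun x hx => ⟨x, hx⟩) hl, ?_, ?_⟩
  · simpa using hn
  · simp [List.map_pmap]

/-- The bound on the length of uncollapsible stacks. -/
noncomputable def stateBound (g : LRApprox.ContextFreeGrammar T) : ℕ :=
  ((dset_finite g).finite_subsets.toFinset).card

lemma length_le_of_nodup {l : List (LRState g)} (hn : l.Nodup) (hm : ∀ x ∈ l, x ⊆ Dset g) :
    l.length ≤ stateBound g := by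
  classical
  rw [← List.toFinset_card_of_nodup hn]
  apply Finset.card_le_card
  intro x hx
  rw [Set.Finite.mem_toFinset]
  exact hm x (List.mem_toFinset.1 hx)

/-- The set of "good" uncollapsible stacks. -/
def USet (g : LRApprox.ContextFreeGrammar T) : Set (Stack g) :=
  {σ | σ.Chain' (SRel g) ∧ (∀ e ∈ σ, e ∈ PSet g) ∧ ¬ Collapsible g σ}

lemma uset_finite (g : LRApprox.ContextFreeGrammar T) : (USet g).Finite := by
  apply (finite_bounded_lists (pset_finite g) (stateBound g)).subset
  rintro σ ⟨hc, he, hu⟩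
  refine ⟨he, ?_⟩
  have hnd := nodup_of_uncollapsible hc hu
  have hle := length_le_of_nodup hnd (fun x hx => ?_)
  · rw [← List.length_map (as := σ) Prod.fst]
    exact hle
  · obtain ⟨e, he', rfl⟩ := List.mem_map.1 hx
    exact (he e he').1

lemma isLoop_ne_nil {τ : Stack g} (h : IsLoop g τ) : τ ≠ [] := by
  obtain ⟨p, q, h1, -, -⟩ := h
  intro hn
  rw [hn] at h1
  simp at h1

lemma ic_collapsible {σ σ' : Stack g} (h : ImmediatelyCollapses g σ σ') : Collapsible g σ := by
  obtain ⟨ρ, τ, υ, h1, _, hm, _⟩ := h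
  exact ⟨ρ, τ, υ, h1, hm.1⟩

lemma ic_length {σ σ' : Stack g} (h : ImmediatelyCollapses g σ σ') : σ'.length < σ.length := by
  obtain ⟨ρ, τ, υ, h1, h2, hm, _⟩ := h
  have hτ : 0 < τ.length := List.length_pos_iff.2 (isLoop_ne_nil hm.1)
  subst h1; subst h2
  simp only [List.length_append]
  omega

lemma ic_subset {σ σ' : Stack g} (h : ImmediatelyCollapses g σ σ') : ∀ e ∈ σ', e ∈ σ := by
  obtain ⟨ρ, τ, υ, h1, h2, _, _⟩ := h
  subst h1; subst h2
  intro e he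
  rcases List.mem_append.1 he with he | he
  · exact List.mem_append.2 (Or.inl (List.mem_append.2 (Or.inl he)))
  · exact List.mem_append.2 (Or.inr he)

lemma ic_det {σ σ₁ σ₂ : Stack g} (h1 : ImmediatelyCollapses g σ σ₁)
    (h2 : ImmediatelyCollapses g σ σ₂) : σ₁ = σ₂ := by
  obtain ⟨ρ₁, τ₁, υ₁, e1, f1, m1, n1⟩ := h1
  obtain ⟨ρ₂, τ₂, υ₂, e2, f2, m2, n2⟩ := h2
  have hρ : ρ₁ = ρ₂ := by
    have p1 : ρ₁ <+: σ := ⟨τ₁ ++ υ₁, by rw [e1, List.append_assoc]⟩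
    have p2 : ρ₂ <+: σ := ⟨τ₂ ++ υ₂, by rw [e2, List.append_assoc]⟩
    rcases List.prefix_or_prefix_of_prefix p1 p2 with hp | hp
    · by_contra hne
      exact n2 ⟨ρ₁, τ₁, υ₁, e1, hp, hne, m1.1⟩
    · by_contra hne
      exact n1 ⟨ρ₂, τ₂, υ₂, e2, hp, Ne.symm hne, m2.1⟩
  subst hρ
  have he : τ₁ ++ υ₁ = τ₂ ++ υ₂ := by
    apply List.append_cancel_left (as := ρ₁)
    rw [← List.append_assoc, ← e1, e2, List.append_assoc]
  have hτ : τ₁ = τ₂ := by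
    have p1 : τ₁ <+: τ₁ ++ υ₁ := List.prefix_append _ _
    have p2 : τ₂ <+: τ₁ ++ υ₁ := he ▸ List.prefix_append _ _
    rcases List.prefix_or_prefix_of_prefix p1 p2 with hp | hp
    · by_contra hne
      exact m2.2 τ₁ hp hne m1.1
    · by_contra hne
      exact m1.2 τ₂ hp (Ne.symm hne) m2.1
  subst hτ
  have hυ := List.append_cancel_left he
  rw [f1, f2, hυ]

lemma collapsible_ic {σ : Stack g} (h : Collapsible g σ) :
    ∃ σ', ImmediatelyCollapses g σ σ' := by
  classical
  obtain ⟨ρ0, τ0, υ0, e0, l0⟩ := h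
  have hP : ∃ k, ∃ τ υ : Stack g, σ = σ.take k ++ τ ++ υ ∧ IsLoop g τ := by
    refine ⟨ρ0.length, τ0, υ0, ?_, l0⟩
    have ht : σ.take ρ0.length = ρ0 := by rw [e0, List.append_assoc, List.take_left]
    rw [ht]; exact e0
  obtain ⟨τ1, υ1, e1, l1⟩ := Nat.find_spec hP
  set k0 := Nat.find hP with hk0def
  have hk0 : k0 ≤ σ.length := by
    by_contra hgt
    push_neg at hgt
    have htk : σ.take k0 = σ := List.take_of_length_le (le_of_lt hgt)
    refine Nat.find_min hP hgt ⟨τ1, υ1, ?_, l1⟩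
    rw [htk] at e1
    rw [List.take_length]
    exact e1
  have hQ : ∃ m, ∃ τ υ : Stack g, σ = σ.take k0 ++ τ ++ υ ∧ IsLoop g τ ∧ τ.length = m :=
    ⟨τ1.length, τ1, υ1, e1, l1, rfl⟩
  obtain ⟨τ2, υ2, e2, l2, hm2⟩ := Nat.find_spec hQ
  refine ⟨σ.take k0 ++ υ2, σ.take k0, τ2, υ2, e2, rfl, ⟨l2, ?_⟩, ?_⟩
  · intro τ' hp hne hl'
    obtain ⟨w, hw⟩ := hp
    have hlt : τ'.length < Nat.find hQ := by
      rw [← hm2]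
      exact lt_of_le_of_ne (by rw [← hw]; simp) (fun hh => hne (by
        have := List.IsPrefix.eq_of_length ⟨w, hw⟩ hh
        exact this))
    refine Nat.find_min hQ hlt ⟨τ', w ++ υ2, ?_, hl', rfl⟩
    conv_lhs => rw [e2, ← hw]
    simp only [List.append_assoc]
  · rintro ⟨ρ', τ', υ', e', hp, hne, hl'⟩
    have h2 : (σ.take k0).length = k0 := by
      rw [List.length_take]
      omega
    have hρlen : ρ'.length < k0 := by
      have hle : ρ'.length ≤ k0 := h2 ▸ hp.length_le
      rcases lt_or_eq_of_le hle with hlt | heq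
      · exact hlt
      · exact absurd (hp.eq_of_length (by rw [heq, h2])) hne
    apply Nat.find_min hP hρlen
    have htp : σ.take ρ'.length = ρ' := by
      conv_lhs => rw [e', List.append_assoc, List.take_left]
    exact ⟨τ', υ', by rw [htp]; exact e', hl'⟩

lemma collapses_eq_self {σ τ : Stack g} (hu : ¬ Collapsible g σ) (h : Collapses g σ τ) :
    τ = σ := by
  rcases h.cases_head with h | ⟨c, hc, _⟩
  · exact h.symm
  · exact absurd (ic_collapsible hc) hu

lemma exists_nf (σ : Stack g) : ∃ τ, ¬ Collapsible g τ ∧ Collapses g σ τ := by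
  by_cases hc : Collapsible g σ
  · obtain ⟨σ', hσ'⟩ := collapsible_ic hc
    have hlen : σ'.length < σ.length := ic_length hσ'
    obtain ⟨τ, h1, h2⟩ := exists_nf σ'
    exact ⟨τ, h1, Relation.ReflTransGen.head hσ' h2⟩
  · exact ⟨σ, hc, Relation.ReflTransGen.refl⟩
termination_by σ.length

lemma nf_unique : ∀ {σ τ₁ : Stack g}, Collapses g σ τ₁ → ¬ Collapsible g τ₁ →
    ∀ {τ₂ : Stack g}, Collapses g σ τ₂ → ¬ Collapsible g τ₂ → τ₁ = τ₂ := by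
  intro σ τ₁ h1
  induction h1 using Relation.ReflTransGen.head_induction_on with
  | refl =>
    intro u1 τ₂ h2 u2
    rcases h2.cases_head with h | ⟨c, hc, _⟩
    · exact h
    · exact absurd (ic_collapsible hc) u1
  | head hab hbc ih =>
    intro u1 τ₂ h2 u2
    rcases h2.cases_head with h | ⟨c, hc, h2'⟩
    · subst h
      exact absurd (ic_collapsible hab) u2
    · have hbc' := ic_det hab hc
      subst hbc'
      exact ih u1 h2' u2

lemma ic_chain {σ σ' : Stack g} (hc : σ.Chain' (SRel g)) (h : ImmediatelyCollapses g σ σ') :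
    σ'.Chain' (SRel g) := by
  obtain ⟨ρ, τ, υ, e1, e2, hm, -⟩ := h
  obtain ⟨p, q, hh, hl, hnx⟩ := hm.1
  subst e1; subst e2
  unfold List.Chain' at hc
  rw [List.append_assoc, List.isChain_append] at hc
  obtain ⟨cρ, cτυ, J1⟩ := hc
  rw [List.isChain_append] at cτυ
  obtain ⟨cτ, cυ, J2⟩ := cτυ
  refine List.isChain_append.2 ⟨cρ, cυ, fun x hx y hy => ?_⟩
  have hτne : τ ≠ [] := by
    intro hn; rw [hn] at hh; simp at hh
  have h1 : SRel g x p := by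
    apply J1 x hx p
    rw [List.head?_append_of_ne_nil τ hτne, hh]
    rfl
  have h2 : SRel g q y := J2 q (by rw [hl]; rfl) y hy
  show next g x.1 x.2 = y.1
  rw [h1]
  rw [show y.1 = next g q.1 q.2 from h2.symm, hnx]

lemma collapses_chain_entries {σ τ : Stack g} (h : Collapses g σ τ)
    (hc : σ.Chain' (SRel g)) (he : ∀ e ∈ σ, e ∈ PSet g) :
    τ.Chain' (SRel g) ∧ ∀ e ∈ τ, e ∈ PSet g := by
  induction h with
  | refl => exact ⟨hc, he⟩
  | tail _ hic ih =>
    obtain ⟨c1, e1⟩ := ih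
    exact ⟨ic_chain c1 hic, fun e he' => e1 e (ic_subset hic e he')⟩

/-- The unique uncollapsible normal form of a stack. -/
noncomputable def nf (σ : Stack g) : Stack g := (exists_nf σ).choose

lemma nf_uncoll (σ : Stack g) : ¬ Collapsible g (nf σ) := (exists_nf σ).choose_spec.1

lemma nf_collapses (σ : Stack g) : Collapses g σ (nf σ) := (exists_nf σ).choose_spec.2

lemma collEquiv_iff {σ σ' : Stack g} : CollEquiv g σ σ' ↔ Collapses g σ' (nf σ) := by
  constructor
  · rintro ⟨υ, hu, h1, h2⟩
    have huv : υ = nf σ := nf_unique h1 hu (nf_collapses σ) (nf_uncoll σ)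
    rw [← huv]
    exact h2
  · intro h
    exact ⟨nf σ, nf_uncoll σ, nf_collapses σ, h⟩

lemma collEquiv_symm {σ σ' : Stack g} (h : CollEquiv g σ σ') : CollEquiv g σ' σ := by
  obtain ⟨τ, h1, h2, h3⟩ := h
  exact ⟨τ, h1, h3, h2⟩

lemma nf_mem_uset {s : LRState g} {σ : Stack g} (hs : Stacks g s σ) : nf σ ∈ USet g := by
  obtain ⟨hc, -⟩ := stacks_chain hs
  obtain ⟨c, e⟩ := collapses_chain_entries (nf_collapses σ) hc (stacks_entries hs)
  exact ⟨c, e, nf_uncoll σ⟩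

end LRAux

open LRApprox

/-- There are only finitely many uncollapsible possible
stacks; consequently, the collapsing equivalence has finitely many classes on
the possible stacks, and the recognizer unfolded by the collapsing congruence
has finitely many states. -/
theorem finitely_many_uncollapsible_stacks {T : Type*} (g : LRApprox.ContextFreeGrammar T) :
    {σ : Stack g | (∃ s : LRState g, Stacks g s σ) ∧ ¬ Collapsible g σ}.Finite ∧
    {C : Set (Stack g) | ∃ σ : Stack g, (∃ s : LRState g, Stacks g s σ) ∧
        C = {σ' : Stack g | CollEquiv g σ σ'}}.Finite ∧
    {p : UState g | IsUState g (CollCong g) p}.Finite := by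
  classical
  have hU := LRAux.uset_finite g
  refine ⟨?_, ?_, ?_⟩
  · apply hU.subset
    rintro σ ⟨⟨s, hs⟩, hu⟩
    exact ⟨(LRAux.stacks_chain hs).1, LRAux.stacks_entries hs, hu⟩
  · apply (hU.image (fun τ => {σ' : Stack g | Collapses g σ' τ})).subset
    rintro C ⟨σ, ⟨s, hs⟩, rfl⟩
    refine ⟨LRAux.nf σ, LRAux.nf_mem_uset hs, ?_⟩
    ext σ'
    simp only [Set.mem_setOf_eq]
    exact LRAux.collEquiv_iff.symm
  · apply ((((LRAux.dset_finite g).finite_subsets).prod hU).image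
      (fun x : LRState g × Stack g =>
        ((x.1 : LRState g), {τ : Stack g | Stacks g x.1 τ ∧ Collapses g τ x.2}))).subset
    rintro p ⟨σ, hσ, hp2⟩
    refine ⟨(p.1, LRAux.nf σ), ⟨LRAux.stacks_state_subset hσ, LRAux.nf_mem_uset hσ⟩, ?_⟩
    rw [Prod.ext_iff]
    refine ⟨rfl, ?_⟩
    rw [hp2]
    ext τ
    simp only [Set.mem_setOf_eq]
    constructor
    · rintro ⟨h1, h2⟩
      exact ⟨h1, h1, hσ, LRAux.collEquiv_symm (LRAux.collEquiv_iff.2 h2)⟩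
    · rintro ⟨h1, _, _, h3⟩
      exact ⟨h1, LRAux.collEquiv_iff.1 (LRAux.collEquiv_symm h3)⟩
end
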